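/- Let p ≥ 3 be a prime, d ≥ 3, and let U = UT(d+1, Z/pZ) be the group of upper unitriangular (d+1) × (d+1) matrices over Z/pZ. Set m = ⌈d/2⌉ and for 1 ≤ k ≤ m − 1 let H_k be the subgroup of U generated by γ_2(U) together with the root subgroups X_1, …, X_k and X_{d−k+1}, …, X_d. Then each H_k is a characteristic subgroup of U, i.e., it is mapped to itself by every automorphism of U. -/

import Mathlib

open Matrix

/-- The group of upper unitriangular `n × n` matrices over `ℤ/pℤ`, as a subgroup of the
units of the matrix ring: upper triangular matrices all of whose diagonal entries are `1`. -/
def UT (p n : ℕ) [Fact p.Prime] : Subgroup (Matrix (Fin n) (Fin n) (ZMod p))ˣ where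
  carrier := {A | (∀ i j : Fin n, j < i → (A : Matrix (Fin n) (Fin n) (ZMod p)) i j = 0) ∧
                  ∀ i : Fin n, (A : Matrix (Fin n) (Fin n) (ZMod p)) i i = 1}
  one_mem' := by
    refine ⟨fun i j hij => ?_, fun i => ?_⟩
    · simp [Matrix.one_apply, (ne_of_lt hij).symm]
    · simp
  mul_mem' := by
    rintro A B ⟨hA0, hA1⟩ ⟨hB0, hB1⟩
    refine ⟨fun i j hij => ?_, fun i => ?_⟩
    · show (A.val * B.val) i j = 0
      rw [Matrix.mul_apply]
      refine Finset.sum_eq_zero fun k _ => ?_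
      rcases lt_or_ge k i with h | h
      · rw [hA0 i k h, zero_mul]
      · rw [hB0 k j (lt_of_lt_of_le hij h), mul_zero]
    · show (A.val * B.val) i i = 1
      rw [Matrix.mul_apply, Finset.sum_eq_single i]
      · rw [hA1, hB1, one_mul]
      · intro k _ hk
        rcases lt_or_gt_of_ne hk with h | h
        · rw [hA0 i k h, zero_mul]
        · rw [hB0 k i h, mul_zero]
      · exact fun h => absurd (Finset.mem_univ i) h
  inv_mem' := by
    rintro A ⟨hA0, hA1⟩
    have hBT : (A : Matrix (Fin n) (Fin n) (ZMod p)).BlockTriangular id :=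
      fun i j hij => hA0 i j hij
    have hInv : Invertible (A : Matrix (Fin n) (Fin n) (ZMod p)) := A.invertible
    have hBTinv : ((A : Matrix (Fin n) (Fin n) (ZMod p))⁻¹).BlockTriangular id :=
      Matrix.blockTriangular_inv_of_blockTriangular hBT
    have hval : ((A⁻¹ : (Matrix (Fin n) (Fin n) (ZMod p))ˣ) : Matrix (Fin n) (Fin n) (ZMod p))
        = (A : Matrix (Fin n) (Fin n) (ZMod p))⁻¹ := Matrix.coe_units_inv A
    refine ⟨fun i j hij => ?_, fun i => ?_⟩
    · rw [hval]; exact hBTinv (show (id j : Fin n) < id i from hij)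
    · rw [hval]
      have hmul : (A : Matrix (Fin n) (Fin n) (ZMod p))⁻¹ * (A : Matrix (Fin n) (Fin n) (ZMod p)) = 1 :=
        Matrix.nonsing_inv_mul _ ((Matrix.isUnit_iff_isUnit_det _).mp A.isUnit)
      have := congrFun (congrFun hmul i) i
      rw [Matrix.mul_apply, Finset.sum_eq_single i] at this
      · rwa [hA1 i, mul_one, Matrix.one_apply_eq] at this
      · intro k _ hk
        rcases lt_or_gt_of_ne hk with h | h
        · exact mul_eq_zero_of_left (hBTinv (show (id k : Fin n) < id i from h)) _
        · exact mul_eq_zero_of_right _ (hA0 k i h)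
      · exact fun h => absurd (Finset.mem_univ i) h

/-- The root subgroup `X_i = {1 + t·E_{i,i+1} : t ∈ ℤ/pℤ}` of `UT p (d+1)`. -/
def Xroot (p d : ℕ) [Fact p.Prime] (i : Fin d) : Subgroup ↥(UT p (d + 1)) where
  carrier := {A | ∃ t : ZMod p,
    ((A : (Matrix (Fin (d+1)) (Fin (d+1)) (ZMod p))ˣ) : Matrix (Fin (d+1)) (Fin (d+1)) (ZMod p))
      = 1 + t • Matrix.single i.castSucc i.succ 1}
  one_mem' := ⟨0, by simp⟩
  mul_mem' := by
    rintro a b ⟨t, ht⟩ ⟨s, hs⟩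
    refine ⟨t + s, ?_⟩
    have : ((((a * b : ↥(UT p (d+1))) : (Matrix (Fin (d+1)) (Fin (d+1)) (ZMod p))ˣ)) :
        Matrix (Fin (d+1)) (Fin (d+1)) (ZMod p)) =
        (1 + t • Matrix.single i.castSucc i.succ 1) *
        (1 + s • Matrix.single i.castSucc i.succ 1) := by
      push_cast
      rw [← ht, ← hs]
    rw [this]
    have hEE : (Matrix.single i.castSucc i.succ (1 : ZMod p)) *
        (Matrix.single i.castSucc i.succ 1) = 0 :=
      Matrix.single_mul_single_of_ne _ _ _ _ (Fin.castSucc_lt_succ (i := i)).ne' _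
    rw [mul_add, mul_one, add_mul, one_mul, smul_mul_smul_comm, hEE, smul_zero, add_zero,
      add_smul]
    abel
  inv_mem' := by
    rintro a ⟨t, ht⟩
    refine ⟨-t, ?_⟩
    have hEE : (Matrix.single i.castSucc i.succ (1 : ZMod p)) *
        (Matrix.single i.castSucc i.succ 1) = 0 :=
      Matrix.single_mul_single_of_ne _ _ _ _ (Fin.castSucc_lt_succ (i := i)).ne' _
    have hmul : ((a : (Matrix (Fin (d+1)) (Fin (d+1)) (ZMod p))ˣ) :
        Matrix (Fin (d+1)) (Fin (d+1)) (ZMod p)) *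
        (1 + (-t) • Matrix.single i.castSucc i.succ 1) = 1 := by
      rw [ht, mul_add, mul_one, add_mul, one_mul, smul_mul_smul_comm, hEE, smul_zero, add_zero]
      rw [neg_smul]
      abel
    have hval : (((a⁻¹ : ↥(UT p (d+1))) : (Matrix (Fin (d+1)) (Fin (d+1)) (ZMod p))ˣ) :
        Matrix (Fin (d+1)) (Fin (d+1)) (ZMod p))
        = ((a : (Matrix (Fin (d+1)) (Fin (d+1)) (ZMod p))ˣ) :
            Matrix (Fin (d+1)) (Fin (d+1)) (ZMod p))⁻¹ := by
      rw [InvMemClass.coe_inv]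
      exact Matrix.coe_units_inv _
    rw [hval, Matrix.inv_eq_right_inv hmul]

/-- The subgroup `H_k` of `UT p (d+1)`: generated by `γ₂(U) = lowerCentralSeries U 1`
together with the root subgroups `X_1, …, X_k` and `X_{d−k+1}, …, X_d`
(in `0`-based indexing: `X i` for `i < k` or `d − k ≤ i`). -/
def Hsub (p d : ℕ) [Fact p.Prime] (k : ℕ) : Subgroup ↥(UT p (d + 1)) :=
  Subgroup.lowerCentralSeries (⊤ : Subgroup ↥(UT p (d + 1))) 1 ⊔
    ⨆ i ∈ {i : Fin d | (i : ℕ) < k ∨ d - k ≤ (i : ℕ)}, Xroot p d i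

open scoped commutatorElement


namespace UTC
open Matrix
variable {p n : ℕ} [Fact p.Prime]

abbrev M (p n : ℕ) [Fact p.Prime] := Matrix (Fin n) (Fin n) (ZMod p)

/-- ℕ-indexed entry with out-of-range entries 0. -/
def en (A : M p n) (i j : ℕ) : ZMod p :=
  if h : i < n ∧ j < n then A ⟨i, h.1⟩ ⟨j, h.2⟩ else 0

lemma en_of_lt (A : M p n) {i j : ℕ} (hi : i < n) (hj : j < n) :
    en A i j = A ⟨i, hi⟩ ⟨j, hj⟩ := by simp [en, hi, hj]

lemma en_out (A : M p n) {i j : ℕ} (h : ¬(i < n ∧ j < n)) : en A i j = 0 := by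
  simp [en, h]

lemma en_one (i j : ℕ) : en (1 : M p n) i j = if i = j ∧ i < n then 1 else 0 := by
  unfold en
  split
  · rename_i h
    rcases h with ⟨h1, h2⟩
    by_cases hij : i = j
    · subst hij; simp [Matrix.one_apply, h1]
    · simp [Matrix.one_apply, hij, fun hh : (⟨i,h1⟩ : Fin n) = ⟨j,h2⟩ => hij (by
        simpa [Fin.ext_iff] using hh)]
  · rename_i h
    have : ¬(i = j ∧ i < n) := by
      rintro ⟨rfl, hi⟩; exact h ⟨hi, hi⟩
    simp [this]

lemma en_one_ne {i j : ℕ} (h : i ≠ j) : en (1 : M p n) i j = 0 := by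
  rw [en_one]; simp [h]

lemma en_one_diag {i : ℕ} (h : i < n) : en (1 : M p n) i i = 1 := by
  rw [en_one]; simp [h]

lemma en_mul (A B : M p n) (i j : ℕ) :
    en (A * B) i j = ∑ l ∈ Finset.range n, en A i l * en B l j := by
  by_cases h : i < n ∧ j < n
  · rw [en_of_lt _ h.1 h.2, Matrix.mul_apply]
    rw [Finset.sum_range fun l => en A i l * en B l j]
    · apply Finset.sum_congr rfl
      intro l _
      rw [en_of_lt _ h.1 l.isLt, en_of_lt _ l.isLt h.2]
  · rw [en_out _ h]
    symm; apply Finset.sum_eq_zero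
    intro l hl
    rcases not_and_or.mp h with hi | hj
    · rw [en_out A (by tauto), zero_mul]
    · rw [en_out B (by tauto), mul_zero]


abbrev UU (p n : ℕ) [Fact p.Prime] := ↥(UT p n)

def ev (g : UU p n) (i j : ℕ) : ZMod p := en ((g : (M p n)ˣ) : M p n) i j

lemma ev_one (i j : ℕ) : ev (1 : UU p n) i j = en (1 : M p n) i j := by
  unfold ev; norm_cast

lemma ev_mul (g h : UU p n) (i j : ℕ) :
    ev (g * h) i j = ∑ l ∈ Finset.range n, ev g i l * ev h l j := by
  unfold ev
  have : (((g * h : UU p n) : (M p n)ˣ) : M p n)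
      = ((g : (M p n)ˣ) : M p n) * ((h : (M p n)ˣ) : M p n) := by push_cast; ring
  rw [this, en_mul]

/-- `g` agrees with the identity strictly below the `m`-th superdiagonal. -/
def Lv (m : ℕ) (g : UU p n) : Prop := ∀ i j : ℕ, j < i + m → ev g i j = en (1 : M p n) i j

lemma Lv_one_all (g : UU p n) : Lv 1 g := by
  intro i j hj
  by_cases h : i < n ∧ j < n
  · rcases g.prop with ⟨hlow, hdiag⟩
    unfold ev
    rcases Nat.lt_or_ge j i with hlt | hge
    · rw [en_of_lt _ h.1 h.2, hlow ⟨i, h.1⟩ ⟨j, h.2⟩ hlt, en_one_ne (by omega)]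
    · have : j = i := Nat.le_antisymm (by omega) hge
      subst this
      rw [en_of_lt _ h.1 h.2, hdiag ⟨j, h.1⟩, en_one_diag h.1]
  · rw [ev, en_out _ h, en_out _ h]

lemma Lv_mono {a b : ℕ} (hab : b ≤ a) {g : UU p n} (hg : Lv a g) : Lv b g :=
  fun i j hj => hg i j (by omega)

lemma Lv_of_one : Lv n (1 : UU p n) := fun i j _ => ev_one i j

lemma ev_diag (g : UU p n) {i : ℕ} (h : i < n) : ev g i i = 1 := by
  rw [Lv_one_all g i i (by omega), en_one_diag h]

lemma ev_low (g : UU p n) {i j : ℕ} (h : j < i) : ev g i j = 0 := by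
  rw [Lv_one_all g i j (by omega), en_one_ne (by omega)]

/-- Entries of a product strictly below level `a + b`. -/
lemma L1 {a b : ℕ} (ha : 1 ≤ a) (hb : 1 ≤ b) {g h : UU p n} (hg : Lv a g) (hh : Lv b h)
    {i j : ℕ} (hj : j < i + a + b) :
    ev (g * h) i j = ev g i j + ev h i j - en (1 : M p n) i j := by
  by_cases hr : i < n ∧ j < n
  · rw [ev_mul]
    have key : ∀ l ∈ Finset.range n, l ≠ j →
        (ev g i l - en (1 : M p n) i l) * ev h l j = 0 := by
      intro l _ hlj
      rcases Nat.lt_or_ge l (i + a) with hl | hl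
      · rw [hg i l hl]; ring
      · have : ev h l j = en (1 : M p n) l j := hh l j (by omega)
        rw [this, en_one_ne hlj, mul_zero]
    have e1 : ∑ l ∈ Finset.range n, (ev g i l - en (1 : M p n) i l) * ev h l j
        = (ev g i j - en (1 : M p n) i j) * ev h j j := by
      apply Finset.sum_eq_single_of_mem j (Finset.mem_range.mpr hr.2)
      exact fun l hl hlj => key l hl hlj
    have e2 : ∑ l ∈ Finset.range n, en (1 : M p n) i l * ev h l j = ev h i j := by
      rw [Finset.sum_eq_single_of_mem i (Finset.mem_range.mpr hr.1)]
      · rw [en_one_diag hr.1, one_mul]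
      · intro l _ hli
        rw [en_one_ne (Ne.symm hli), zero_mul]
    calc ∑ l ∈ Finset.range n, ev g i l * ev h l j
        = ∑ l ∈ Finset.range n, ((ev g i l - en (1 : M p n) i l) * ev h l j
            + en (1 : M p n) i l * ev h l j) := by
          apply Finset.sum_congr rfl; intro l _; ring
      _ = (ev g i j - en (1 : M p n) i j) * ev h j j + ev h i j := by
          rw [Finset.sum_add_distrib, e1, e2]
      _ = ev g i j + ev h i j - en (1 : M p n) i j := by
          rw [ev_diag h hr.2]; ring
  · rw [ev, en_out _ hr, ev, en_out _ hr, ev, en_out _ hr, en_out _ hr]; ring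

/-- Entries of a product at level exactly `a + b`. -/
lemma L1X {a b : ℕ} (ha : 1 ≤ a) (hb : 1 ≤ b) {g h : UU p n} (hg : Lv a g) (hh : Lv b h)
    {i j : ℕ} (hj : j = i + a + b) :
    ev (g * h) i j = ev g i j + ev h i j + ev g i (i + a) * ev h (i + a) j := by
  subst hj
  by_cases hr : i + a + b < n
  · have hi : i < n := by omega
    have hia : i + a < n := by omega
    rw [ev_mul]
    have e2 : ∑ l ∈ Finset.range n, en (1 : M p n) i l * ev h l (i+a+b) = ev h i (i+a+b) := by
      rw [Finset.sum_eq_single_of_mem i (Finset.mem_range.mpr hi)]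
      · rw [en_one_diag hi, one_mul]
      · intro l _ hli
        rw [en_one_ne (Ne.symm hli), zero_mul]
    have split : ∀ l, ev g i l * ev h l (i+a+b)
        = (ev g i l - en (1 : M p n) i l) * ev h l (i+a+b)
          + en (1 : M p n) i l * ev h l (i+a+b) := by intro l; ring
    have key : ∀ l ∈ Finset.range n, l ∉ ({i + a, i + a + b} : Finset ℕ) →
        (ev g i l - en (1 : M p n) i l) * ev h l (i+a+b) = 0 := by
      intro l _ hlmem
      simp only [Finset.mem_insert, Finset.mem_singleton] at hlmem
      push_neg at hlmem
      rcases Nat.lt_or_ge l (i + a) with hl | hl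
      · rw [hg i l hl]; ring
      · have hl2 : l > i + a := lt_of_le_of_ne hl (Ne.symm hlmem.1)
        rw [hh l (i+a+b) (by omega), en_one_ne hlmem.2, mul_zero]
    have hsubset : ({i + a, i + a + b} : Finset ℕ) ⊆ Finset.range n := by
      intro x hx
      simp only [Finset.mem_insert, Finset.mem_singleton] at hx
      rcases hx with rfl | rfl <;> simp [Finset.mem_range] <;> omega
    have e1 : ∑ l ∈ Finset.range n, (ev g i l - en (1 : M p n) i l) * ev h l (i+a+b)
        = (ev g i (i+a) - en (1 : M p n) i (i+a)) * ev h (i+a) (i+a+b)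
          + (ev g i (i+a+b) - en (1 : M p n) i (i+a+b)) * ev h (i+a+b) (i+a+b) := by
      rw [← Finset.sum_subset hsubset (fun x hx hnx => key x hx hnx)]
      rw [Finset.sum_pair (by omega)]
    calc ∑ l ∈ Finset.range n, ev g i l * ev h l (i+a+b)
        = ∑ l ∈ Finset.range n, ((ev g i l - en (1 : M p n) i l) * ev h l (i+a+b)
            + en (1 : M p n) i l * ev h l (i+a+b)) := by
          apply Finset.sum_congr rfl; intro l _; rw [split]
      _ = _ := by
          rw [Finset.sum_add_distrib, e1, e2, ev_diag h hr, en_one_ne (by omega),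
            en_one_ne (by omega)]
          ring
  · have h0 : ∀ (x : UU p n) (l : ℕ), ev x l (i+a+b) = 0 := by
      intro x l; rw [ev, en_out]; tauto
    simp [h0]

end UTC

namespace UTC
variable {p n : ℕ} [Fact p.Prime]

lemma Lv_mul {m : ℕ} (hm : 1 ≤ m) {g h : UU p n} (hg : Lv m g) (hh : Lv m h) :
    Lv m (g * h) := by
  intro i j hj
  rw [L1 hm hm hg hh (by omega), hg i j hj, hh i j hj]; ring

lemma Lv_inv {a : ℕ} {g : UU p n} (hg : Lv a g) : Lv a g⁻¹ := by
  have main : ∀ m, m ≤ a → Lv m g⁻¹ := by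
    intro m
    induction m with
    | zero => intro _ i j hj; exact Lv_one_all g⁻¹ i j (by omega)
    | succ m ih =>
      intro hma
      intro i j hj
      rcases Nat.lt_or_ge j (i + m) with hjm | hjm
      · exact ih (by omega) i j hjm
      · have hjeq : j = i + m := by omega
        rcases Nat.eq_zero_or_pos m with rfl | hm
        · exact Lv_one_all g⁻¹ i j (by omega)
        · have h1 : ev (g * g⁻¹) i j = ev g i j + ev g⁻¹ i j - en (1 : M p n) i j :=
            L1 (a := m + 1) (b := m) (by omega) hm (Lv_mono hma hg) (ih (by omega))
              (by omega)
          rw [mul_inv_cancel] at h1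
          have h2 : ev g i j = en (1 : M p n) i j := hg i j (by omega)
          have h3 : ev (1 : UU p n) i j = en (1 : M p n) i j := ev_one i j
          rw [h3, h2] at h1
          linear_combination -h1
  exact main a le_rfl

lemma ev_inv {a : ℕ} (ha : 1 ≤ a) {g : UU p n} (hg : Lv a g) (i : ℕ) :
    ev g⁻¹ i (i + a) = - ev g i (i + a) := by
  have h1 : ev (g * g⁻¹) i (i+a) = ev g i (i+a) + ev g⁻¹ i (i+a) - en (1 : M p n) i (i+a) :=
    L1 ha ha hg (Lv_inv hg) (by omega)
  rw [mul_inv_cancel, ev_one, en_one_ne (by omega)] at h1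
  linear_combination -h1

lemma Lv_comm {a b : ℕ} (ha : 1 ≤ a) (hb : 1 ≤ b) {g h : UU p n}
    (hg : Lv a g) (hh : Lv b h) : Lv (a + b) ⁅g, h⁆ := by
  have hC : ⁅g, h⁆ * (h * g) = g * h := by group
  have main : ∀ m, m ≤ a + b → Lv m ⁅g, h⁆ := by
    intro m
    induction m with
    | zero => intro _ i j hj; exact Lv_one_all _ i j (by omega)
    | succ m ih =>
      intro hmab i j hj
      rcases Nat.lt_or_ge j (i + m) with hjm | hjm
      · exact ih (by omega) i j hjm
      · have hjeq : j = i + m := by omega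
        rcases Nat.eq_zero_or_pos m with rfl | hm
        · exact Lv_one_all _ i j (by omega)
        · have hhg : Lv 1 (h * g) := Lv_mul le_rfl (Lv_one_all h) (Lv_one_all g)
          have h1 : ev (⁅g, h⁆ * (h * g)) i j
              = ev ⁅g, h⁆ i j + ev (h * g) i j - en (1 : M p n) i j :=
            L1 (a := m) (b := 1) hm le_rfl (ih (by omega)) hhg (by omega)
          rw [hC] at h1
          have h2 : ev (g * h) i j = ev g i j + ev h i j - en (1 : M p n) i j :=
            L1 ha hb hg hh (by omega)
          have h3 : ev (h * g) i j = ev h i j + ev g i j - en (1 : M p n) i j :=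
            L1 hb ha hh hg (by omega)
          rw [h2, h3] at h1
          linear_combination -h1
  exact main (a + b) le_rfl

lemma ev_comm {a b : ℕ} (ha : 1 ≤ a) (hb : 1 ≤ b) {g h : UU p n}
    (hg : Lv a g) (hh : Lv b h) (i : ℕ) :
    ev ⁅g, h⁆ i (i + a + b)
      = ev g i (i + a) * ev h (i + a) (i + a + b)
        - ev h i (i + b) * ev g (i + b) (i + a + b) := by
  have hC : ⁅g, h⁆ * (h * g) = g * h := by group
  have hhg : Lv 1 (h * g) := Lv_mul le_rfl (Lv_one_all h) (Lv_one_all g)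
  have h1 : ev (⁅g, h⁆ * (h * g)) i (i+a+b)
      = ev ⁅g, h⁆ i (i+a+b) + ev (h * g) i (i+a+b) - en (1 : M p n) i (i+a+b) :=
    L1 (a := a + b) (b := 1) (by omega) le_rfl (Lv_comm ha hb hg hh) hhg (by omega)
  rw [hC] at h1
  have h2 : ev (g * h) i (i+a+b)
      = ev g i (i+a+b) + ev h i (i+a+b) + ev g i (i + a) * ev h (i + a) (i+a+b) :=
    L1X ha hb hg hh rfl
  have h3 : ev (h * g) i (i+a+b)
      = ev h i (i+a+b) + ev g i (i+a+b) + ev h i (i + b) * ev g (i + b) (i+a+b) :=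
    L1X hb ha hh hg (by omega)
  rw [h2, h3, en_one_ne (by omega)] at h1
  linear_combination -h1

end UTC

namespace UTC
variable {p n : ℕ} [Fact p.Prime]

lemma Lv_zero (g : UU p n) : Lv 0 g := fun i j hj => Lv_one_all g i j (by omega)

/-- The subgroup of elements agreeing with `1` strictly below the `m`-th superdiagonal. -/
def Gs (p n : ℕ) [Fact p.Prime] (m : ℕ) : Subgroup (UU p n) where
  carrier := {g | Lv m g}
  one_mem' := fun i j _ => ev_one i j
  mul_mem' := by
    intro g h hg hh
    rcases Nat.eq_zero_or_pos m with rfl | hm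
    · exact Lv_zero _
    · exact Lv_mul hm hg hh
  inv_mem' := fun hg => Lv_inv hg

lemma mem_Gs {m : ℕ} {g : UU p n} : g ∈ Gs p n m ↔ Lv m g := Iff.rfl

lemma Gs_mono {a b : ℕ} (h : a ≤ b) : Gs p n b ≤ Gs p n a := fun _ hg => Lv_mono h hg

lemma stdBasisMatrix_apply {i j i' j' : Fin n} (a : ZMod p) :
    (single i j a : M p n) i' j' = if i = i' ∧ j = j' then a else 0 := by
  rw [Matrix.single]; rfl

lemma expand_one_add (A B : M p n) : (1 + A) * (1 + B) = 1 + (A + B + A * B) := by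
  noncomm_ring

lemma en_one_add_std {i j : ℕ} (hi : i < n) (hj : j < n) (t : ZMod p) (a b : ℕ) :
    en ((1 : M p n) + single ⟨i, hi⟩ ⟨j, hj⟩ t) a b
      = en (1 : M p n) a b + (if i = a ∧ j = b then t else 0) := by
  by_cases h : a < n ∧ b < n
  · rw [en_of_lt _ h.1 h.2, en_of_lt _ h.1 h.2]
    show ((1 : M p n) ⟨a, h.1⟩ ⟨b, h.2⟩) + _ = _
    congr 1
    rw [stdBasisMatrix_apply]
    simp [Fin.ext_iff]
  · rw [en_out _ h, en_out _ h]
    have : ¬(i = a ∧ j = b) := by rintro ⟨rfl, rfl⟩; exact h ⟨hi, hj⟩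
    simp [this]

lemma std_mul_std_eq_zero {i j k l : ℕ} (hi : i < n) (hj : j < n) (hk : k < n) (hl : l < n)
    (hne : j ≠ k) (t u : ZMod p) :
    (single ⟨i, hi⟩ ⟨j, hj⟩ t : M p n) * single ⟨k, hk⟩ ⟨l, hl⟩ u = 0 :=
  single_mul_single_of_ne _ _ _ _ (by simp [Fin.ext_iff]; omega) _

/-- The root element `1 + t E_{i j}` as an element of `UT p n`. -/
def xr (i j : ℕ) (hij : i < j) (hj : j < n) (t : ZMod p) : UU p n := by
  have hi : i < n := by omega
  have hEE : ∀ t u : ZMod p, (single ⟨i, hi⟩ ⟨j, hj⟩ t : M p n)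
      * single ⟨i, hi⟩ ⟨j, hj⟩ u = 0 :=
    fun t u => std_mul_std_eq_zero hi hj hi hj (by omega) t u
  refine ⟨⟨(1 : M p n) + single ⟨i, hi⟩ ⟨j, hj⟩ t,
      (1 : M p n) + single ⟨i, hi⟩ ⟨j, hj⟩ (-t), ?_, ?_⟩, ?_, ?_⟩
  · rw [expand_one_add, hEE, add_zero, ← single_add]; simp
  · rw [expand_one_add, hEE, add_zero, ← single_add]; simp
  · intro a b hab
    show ((1 : M p n) + _) a b = 0
    have h1 : (1 : M p n) a b = 0 := Matrix.one_apply_ne (Fin.ne_of_gt hab)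
    simp only [Matrix.add_apply, stdBasisMatrix_apply, h1, zero_add]
    have : ¬((⟨i, hi⟩ : Fin n) = a ∧ (⟨j, hj⟩ : Fin n) = b) := by
      rintro ⟨ha, hb⟩
      rw [Fin.ext_iff] at ha hb
      rw [Fin.lt_def] at hab
      simp only [] at ha hb
      omega
    simp [this]
  · intro a
    show ((1 : M p n) + _) a a = 1
    simp only [Matrix.add_apply, Matrix.one_apply_eq, stdBasisMatrix_apply]
    have : ¬((⟨i, hi⟩ : Fin n) = a ∧ (⟨j, hj⟩ : Fin n) = a) := by
      rintro ⟨ha, hb⟩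
      rw [Fin.ext_iff] at ha hb
      simp only [] at ha hb
      omega
    simp [this]

lemma xr_val (i j : ℕ) (hij : i < j) (hj : j < n) (t : ZMod p) :
    (((xr i j hij hj t : UU p n) : (M p n)ˣ) : M p n)
      = (1 : M p n) + single ⟨i, by omega⟩ ⟨j, hj⟩ t := rfl

lemma ev_xr (i j : ℕ) (hij : i < j) (hj : j < n) (t : ZMod p) (a b : ℕ) :
    ev (xr i j hij hj t) a b = en (1 : M p n) a b + (if i = a ∧ j = b then t else 0) := by
  unfold ev
  rw [xr_val]
  exact en_one_add_std _ hj t a b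

lemma xr_mem_Gs (i j : ℕ) (hij : i < j) (hj : j < n) (t : ZMod p) {m : ℕ} (hm : i + m ≤ j) :
    xr i j hij hj t ∈ Gs p n m := by
  intro a b hb
  rw [ev_xr]
  have : ¬(i = a ∧ j = b) := by rintro ⟨rfl, rfl⟩; omega
  simp [this]

lemma xr_inv (i j : ℕ) (hij : i < j) (hj : j < n) (t : ZMod p) :
    (xr i j hij hj t)⁻¹ = xr i j hij hj (-t) := by
  apply Subtype.ext
  apply Units.ext
  rfl

/-- Chevalley commutator relation for root elements. -/
lemma xr_comm (i l j : ℕ) (hil : i < l) (hlj : l < j) (hj : j < n) (t u : ZMod p) :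
    ⁅xr i l hil (hlj.trans hj) t, xr l j hlj hj u⁆ = xr i j (hil.trans hlj) hj (t * u) := by
  have hi : i < n := by omega
  have hl : l < n := by omega
  apply Subtype.ext
  apply Units.ext
  show ((1 : M p n) + single ⟨i, hi⟩ ⟨l, hl⟩ t)
      * ((1 : M p n) + single ⟨l, hl⟩ ⟨j, hj⟩ u)
      * ((1 : M p n) + single ⟨i, hi⟩ ⟨l, hl⟩ (-t))
      * ((1 : M p n) + single ⟨l, hl⟩ ⟨j, hj⟩ (-u))
      = (1 : M p n) + single ⟨i, hi⟩ ⟨j, hj⟩ (t * u)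
  set E₁ := (single ⟨i, hi⟩ ⟨l, hl⟩ t : M p n)
  set E₂ := (single ⟨l, hl⟩ ⟨j, hj⟩ u : M p n)
  set E₃ := (single ⟨i, hi⟩ ⟨l, hl⟩ (-t) : M p n)
  set E₄ := (single ⟨l, hl⟩ ⟨j, hj⟩ (-u) : M p n)
  have h12 : E₁ * E₂ = single ⟨i, hi⟩ ⟨j, hj⟩ (t * u) :=
    single_mul_single_same _ _ _ _ _
  have h14 : E₁ * E₄ = single ⟨i, hi⟩ ⟨j, hj⟩ (t * (-u)) :=
    single_mul_single_same _ _ _ _ _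
  have h32 : E₃ * E₂ = single ⟨i, hi⟩ ⟨j, hj⟩ ((-t) * u) :=
    single_mul_single_same _ _ _ _ _
  have h34 : E₃ * E₄ = single ⟨i, hi⟩ ⟨j, hj⟩ ((-t) * (-u)) :=
    single_mul_single_same _ _ _ _ _
  have h11 : E₁ * E₃ = 0 := std_mul_std_eq_zero _ _ _ _ (by omega) _ _
  have h13 : E₁ * E₁ = 0 := std_mul_std_eq_zero _ _ _ _ (by omega) _ _
  have h21 : E₂ * E₁ = 0 := std_mul_std_eq_zero _ _ _ _ (by omega) _ _
  have h23 : E₂ * E₃ = 0 := std_mul_std_eq_zero _ _ _ _ (by omega) _ _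
  have h22 : E₂ * E₄ = 0 := std_mul_std_eq_zero _ _ _ _ (by omega) _ _
  have h31 : E₃ * E₁ = 0 := std_mul_std_eq_zero _ _ _ _ (by omega) _ _
  have h33 : E₃ * E₃ = 0 := std_mul_std_eq_zero _ _ _ _ (by omega) _ _
  have h41 : E₄ * E₁ = 0 := std_mul_std_eq_zero _ _ _ _ (by omega) _ _
  have h43 : E₄ * E₃ = 0 := std_mul_std_eq_zero _ _ _ _ (by omega) _ _
  have hIJ : ∀ v w : ZMod p, (single ⟨i, hi⟩ ⟨j, hj⟩ v : M p n)
      * single ⟨l, hl⟩ ⟨j, hj⟩ w = 0 :=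
    fun v w => std_mul_std_eq_zero _ _ _ _ (by omega) _ _
  have hIJ' : ∀ v w : ZMod p, (single ⟨i, hi⟩ ⟨j, hj⟩ v : M p n)
      * single ⟨i, hi⟩ ⟨l, hl⟩ w = 0 :=
    fun v w => std_mul_std_eq_zero _ _ _ _ (by omega) _ _
  calc ((1 : M p n) + E₁) * ((1 : M p n) + E₂) * ((1 : M p n) + E₃) * ((1 : M p n) + E₄)
      = 1 + E₁ + E₂ + E₃ + E₄ + (E₁*E₂ + E₁*E₃ + E₁*E₄ + E₂*E₃ + E₂*E₄ + E₃*E₄)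
        + (E₁*E₂*E₃ + E₁*E₂*E₄ + E₁*E₃*E₄ + E₂*E₃*E₄) + E₁*E₂*E₃*E₄ := by
        noncomm_ring
    _ = (1 : M p n) + single ⟨i, hi⟩ ⟨j, hj⟩ (t * u) := by
        have hE₃ : E₃ = -E₁ := by
          rw [show -E₁ = ((-1 : ZMod p) • E₁) from (neg_one_smul _ _).symm,
            smul_single]
          show E₃ = single _ _ _
          norm_num
          rfl
        have hE₄ : E₄ = -E₂ := by
          rw [show -E₂ = ((-1 : ZMod p) • E₂) from (neg_one_smul _ _).symm,
            smul_single]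
          show E₄ = single _ _ _
          norm_num
          rfl
        have e14 : (single ⟨i, hi⟩ ⟨j, hj⟩ (t * (-u)) : M p n)
            = - single ⟨i, hi⟩ ⟨j, hj⟩ (t * u) := by
          rw [show -(single ⟨i, hi⟩ ⟨j, hj⟩ (t*u) : M p n)
              = ((-1 : ZMod p) • single ⟨i, hi⟩ ⟨j, hj⟩ (t*u)) from
            (neg_one_smul _ _).symm, smul_single]
          norm_num
        have e34 : (single ⟨i, hi⟩ ⟨j, hj⟩ ((-t) * (-u)) : M p n)
            = single ⟨i, hi⟩ ⟨j, hj⟩ (t * u) := by norm_num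
        rw [h12, h11, h14, h23, h22, h34]
        rw [show (single ⟨i, hi⟩ ⟨j, hj⟩ (t*u) * E₃ : M p n) = 0 from hIJ' _ _,
          show (single ⟨i, hi⟩ ⟨j, hj⟩ (t*u) * E₄ : M p n) = 0 from hIJ _ _,
          e14, e34, hE₃, hE₄, zero_mul]
        abel

end UTC

namespace UTC
variable {p n : ℕ} [Fact p.Prime]

lemma lcs_le_Gs (m : ℕ) : Subgroup.lowerCentralSeries (⊤ : Subgroup (UU p n)) m ≤ Gs p n (m + 1) := by
  induction m with
  | zero => exact fun g _ => Lv_one_all g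
  | succ m ih =>
    show ⁅Subgroup.lowerCentralSeries (⊤ : Subgroup (UU p n)) m, ⊤⁆ ≤ Gs p n (m + 2)
    rw [Subgroup.commutator_le]
    intro g hg h _
    have : Lv (m + 1 + 1) ⁅g, h⁆ := Lv_comm (by omega) le_rfl (ih hg) (Lv_one_all h)
    exact this

lemma xr_mem_lcs {m i j : ℕ} (hij : i < j) (hj : j < n) (t : ZMod p) (h : i + m + 1 ≤ j) :
    xr i j hij hj t ∈ Subgroup.lowerCentralSeries (⊤ : Subgroup (UU p n)) m := by
  induction m generalizing i t with
  | zero => trivial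
  | succ m ih =>
    have h1 : i < i + 1 := by omega
    have h2 : i + 1 < j := by omega
    have hn1 : i + 1 < n := by omega
    have hx : xr i j hij hj t = ⁅xr i (i+1) h1 hn1 t, xr (i+1) j h2 hj 1⁆ := by
      rw [show xr i (i+1) h1 hn1 t = xr i (i+1) h1 (h2.trans hj) t from rfl,
        xr_comm i (i+1) j h1 h2 hj t 1]
      congr 1
      ring
    rw [hx]
    show _ ∈ ⁅Subgroup.lowerCentralSeries (⊤ : Subgroup (UU p n)) m, ⊤⁆
    rw [Subgroup.commutator_comm]
    exact Subgroup.commutator_mem_commutator (Subgroup.mem_top _) (ih h2 1 (by omega))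

/-- Product of root elements `1 + f a · E_{a,a+r}` for `a < s`. -/
def Pprod (r : ℕ) (f : ℕ → ZMod p) : ℕ → UU p n
  | 0 => 1
  | (s+1) => Pprod r f s * (if h : s < s + r ∧ s + r < n then xr s (s+r) h.1 h.2 (f s) else 1)

lemma Pprod_mem {s : ℕ} {S : Subgroup (UU p n)} {r : ℕ} {f : ℕ → ZMod p}
    (hf : ∀ a, a < s → ∀ (h : a < a + r ∧ a + r < n), xr a (a+r) h.1 h.2 (f a) ∈ S) :
    Pprod r f s ∈ S := by
  induction s with
  | zero => exact S.one_mem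
  | succ s ih =>
    refine S.mul_mem (ih fun a ha h => hf a (by omega) h) ?_
    split
    · exact hf s (by omega) ‹_›
    · exact S.one_mem

lemma Pprod_mem_Gs {r : ℕ} (hr : 1 ≤ r) (f : ℕ → ZMod p) (s : ℕ) :
    Pprod r f s ∈ Gs p n r :=
  Pprod_mem fun a _ h => xr_mem_Gs _ _ _ _ _ le_rfl

lemma Pprod_ev {r : ℕ} (hr : 1 ≤ r) (f : ℕ → ZMod p) (s : ℕ) (a : ℕ) :
    ev (Pprod r f s : UU p n) a (a + r) = if a < s ∧ a + r < n then f a else 0 := by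
  induction s with
  | zero =>
    show ev (1 : UU p n) a (a+r) = _
    rw [ev_one, en_one_ne (by omega)]
    simp
  | succ s ih =>
    show ev (Pprod r f s * _) a (a + r) = _
    have hfac : ∀ g : UU p n, g ∈ Gs p n r → ev ((Pprod r f s : UU p n) * g) a (a+r)
        = ev (Pprod r f s : UU p n) a (a+r) + ev g a (a+r) := by
      intro g hg
      rw [L1 hr hr (Pprod_mem_Gs hr f s) hg (by omega), en_one_ne (by omega)]
      ring
    split
    · rename_i h
      rw [hfac _ (xr_mem_Gs _ _ _ _ _ le_rfl), ih, ev_xr, en_one_ne (by omega)]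
      by_cases has : a = s
      · subst has
        simp [lt_irrefl, h.2]
      · have h1 : ¬(s = a ∧ s + r = a + r) := by omega
        simp only [h1, if_false, add_zero, zero_add]
        by_cases h2 : a < s ∧ a + r < n
        · simp [h2, (by omega : a < s + 1 ∧ a + r < n)]
        · have h3 : ¬(a < s + 1 ∧ a + r < n) := by omega
          simp only [h2, h3, if_false]
    · rename_i h
      rw [mul_one, ih]
      have : (a < s ∧ a + r < n) ↔ (a < s + 1 ∧ a + r < n) := by omega
      rw [if_congr this rfl rfl]

lemma ev_ext {g h : UU p n} (he : ∀ i j, ev g i j = ev h i j) : g = h := by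
  apply Subtype.ext
  apply Units.ext
  ext i j
  have := he i j
  rwa [ev, ev, en_of_lt _ i.isLt j.isLt, en_of_lt _ i.isLt j.isLt] at this

lemma eq_one_of_Lv_big {m : ℕ} (hm : n ≤ m) {g : UU p n} (hg : g ∈ Gs p n m) : g = 1 := by
  apply ev_ext
  intro i j
  rw [ev_one]
  by_cases h : i < n ∧ j < n
  · exact hg i j (by omega)
  · rw [ev, en_out _ h, en_out _ h]

lemma elim_aux (q : ℕ) : ∀ r : ℕ, 2 ≤ r → n ≤ r + q →
    ∀ g ∈ Gs p n r, g ∈ Subgroup.lowerCentralSeries (⊤ : Subgroup (UU p n)) (r - 1) := by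
  induction q with
  | zero =>
    intro r hr hn g hg
    rw [eq_one_of_Lv_big (by omega) hg]
    exact Subgroup.one_mem _
  | succ q ih =>
    intro r hr hn g hg
    rcases Nat.lt_or_ge n (r + q + 1) with hlt | hge
    · exact ih r hr (by omega) g hg
    · -- n = r + q + 1
      have hr1 : (1 : ℕ) ≤ r := by omega
      obtain ⟨P, hPG, hPev, hPlcs⟩ : ∃ P : UU p n, P ∈ Gs p n r
          ∧ (∀ a, ev P a (a+r) = if a < n ∧ a + r < n then - ev g a (a+r) else 0)
          ∧ P ∈ Subgroup.lowerCentralSeries (⊤ : Subgroup (UU p n)) (r-1) :=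
        ⟨Pprod r (fun a => - ev g a (a+r)) n, Pprod_mem_Gs hr1 _ n,
          fun a => Pprod_ev hr1 _ n a,
          Pprod_mem fun a _ h => xr_mem_lcs h.1 h.2 _ (by omega)⟩
      have hgP : g * P ∈ Gs p n (r + 1) := by
        intro i j hj
        rcases Nat.lt_or_ge j (i + r) with hjr | hjr
        · rw [L1 hr1 hr1 hg hPG (by omega), hg i j hjr, hPG i j hjr]; ring
        · have hje : j = i + r := by omega
          subst hje
          rw [L1 hr1 hr1 hg hPG (by omega), hPev, en_one_ne (by omega)]
          by_cases h2 : i + r < n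
          · rw [if_pos (show i < n ∧ i + r < n from ⟨by omega, h2⟩)]
            ring
          · rw [if_neg (by omega), ev, en_out _ (by omega)]
            ring
      have hgP2 : g * P ∈ Subgroup.lowerCentralSeries (⊤ : Subgroup (UU p n)) r := by
        have := ih (r + 1) (by omega) (by omega) (g * P) hgP
        simpa using this
      have : g = (g * P) * P⁻¹ := by group
      rw [this]
      exact Subgroup.mul_mem _ (Subgroup.lowerCentralSeries_antitone _ (by omega : r - 1 ≤ r) hgP2)
        (Subgroup.inv_mem _ hPlcs)

lemma Gs_eq_lcs (m : ℕ) : Gs p n (m + 1) = Subgroup.lowerCentralSeries (⊤ : Subgroup (UU p n)) m := by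
  rcases Nat.eq_zero_or_pos m with rfl | hm
  · apply le_antisymm
    · exact fun g _ => Subgroup.mem_top g
    · exact fun g _ => Lv_one_all g
  · apply le_antisymm
    · intro g hg
      have := elim_aux n (m + 1) (by omega) (by omega) g hg
      simpa using this
    · exact lcs_le_Gs m

end UTC

namespace UTC
variable {p n : ℕ} [Fact p.Prime]

lemma xr_zero (i j : ℕ) (hij : i < j) (hj : j < n) : xr i j hij hj (0 : ZMod p) = 1 := by
  apply ev_ext
  intro a b
  rw [ev_xr, ev_one]
  simp

/-- Subgroup of `Gs r` with prescribed vanishing entries on the `r`-th superdiagonal. -/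
def Kker (r : ℕ) (hr : 1 ≤ r) (P : ℕ → Prop) : Subgroup (UU p n) where
  carrier := {g | Lv r g ∧ ∀ i, P i → ev g i (i + r) = 0}
  one_mem' := ⟨fun i j _ => ev_one i j, fun i _ => by rw [ev_one, en_one_ne (by omega)]⟩
  mul_mem' := by
    rintro g h ⟨hg1, hg2⟩ ⟨hh1, hh2⟩
    refine ⟨Lv_mul hr hg1 hh1, fun i hi => ?_⟩
    rw [L1 hr hr hg1 hh1 (by omega), hg2 i hi, hh2 i hi, en_one_ne (by omega)]
    ring
  inv_mem' := by
    rintro g ⟨hg1, hg2⟩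
    refine ⟨Lv_inv hg1, fun i hi => ?_⟩
    rw [ev_inv hr hg1, hg2 i hi, neg_zero]

lemma mem_Kker {r : ℕ} {hr : 1 ≤ r} {P : ℕ → Prop} {g : UU p n} :
    g ∈ Kker r hr P ↔ Lv r g ∧ ∀ i, P i → ev g i (i + r) = 0 := Iff.rfl

end UTC

namespace UTC
variable {p d : ℕ} [Fact p.Prime]

/-- abbreviation for the superdiagonal coordinates -/
def tc (g : UU p (d + 1)) (i : ℕ) : ZMod p := ev g i (i + 1)

lemma tc_mul (g h : UU p (d+1)) (i : ℕ) : tc (g * h) i = tc g i + tc h i := by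
  unfold tc
  rw [L1 le_rfl le_rfl (Lv_one_all g) (Lv_one_all h) (by omega), en_one_ne (by omega)]
  ring

lemma tc_inv (g : UU p (d+1)) (i : ℕ) : tc g⁻¹ i = - tc g i :=
  ev_inv le_rfl (Lv_one_all g) i

lemma tc_one (i : ℕ) : tc (1 : UU p (d+1)) i = 0 := by
  unfold tc; rw [ev_one, en_one_ne (by omega)]

/-- `xr` along the first superdiagonal lies in the root subgroup `Xroot`. -/
lemma xr_mem_Xroot {a : ℕ} (ha : a < d) (t : ZMod p) :
    xr a (a+1) (by omega) (by omega) t ∈ Xroot p d ⟨a, ha⟩ := by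
  refine ⟨t, ?_⟩
  show (1 : M p (d+1)) + single ⟨a, by omega⟩ ⟨a+1, by omega⟩ t = _
  congr 1
  rw [smul_single, smul_eq_mul, mul_one]
  rfl

lemma Xroot_tc {a : Fin d} {g : UU p (d+1)} (hg : g ∈ Xroot p d a) (i : ℕ)
    (hia : (a : ℕ) ≠ i) : tc g i = 0 := by
  obtain ⟨t, ht⟩ := hg
  unfold tc ev
  rw [show ((g : (M p (d+1))ˣ) : M p (d+1)) = _ from ht]
  have h1 : (t • single a.castSucc a.succ (1 : ZMod p) : M p (d+1))
      = single ⟨(a : ℕ), by omega⟩ ⟨(a : ℕ) + 1, by omega⟩ t := by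
    rw [smul_single, smul_eq_mul, mul_one]
    rfl
  rw [h1, en_one_add_std (by omega) (by omega)]
  rw [en_one_ne (by omega)]
  simp [hia]

lemma Gs2_le_Hsub (k : ℕ) : Gs p (d+1) 2 ≤ Hsub p d k := by
  rw [Gs_eq_lcs 1]
  exact le_sup_left

lemma Xroot_le_Hsub {k : ℕ} {a : Fin d} (ha : (a : ℕ) < k ∨ d - k ≤ (a : ℕ)) :
    Xroot p d a ≤ Hsub p d k := by
  refine le_trans ?_ le_sup_right
  refine le_trans ?_ (le_iSup _ a)
  exact le_iSup (fun _ => Xroot p d a) ha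

/-- Description of `Hsub` by vanishing of the middle superdiagonal entries. -/
lemma mem_Hsub_iff {k : ℕ} {g : UU p (d+1)} :
    g ∈ Hsub p d k ↔ ∀ i : ℕ, k ≤ i → i < d - k → tc g i = 0 := by
  constructor
  · intro hg
    have hle : Hsub p d k ≤ Kker 1 le_rfl (fun i => k ≤ i ∧ i < d - k) := by
      unfold Hsub
      apply sup_le
      · rw [← Gs_eq_lcs 1]
        intro g hg
        exact ⟨Lv_one_all g, fun i _ => by
          show ev g i (i+1) = 0
          rw [hg i (i+1) (by omega), en_one_ne (by omega)]⟩
      · apply iSup_le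
        intro a
        apply iSup_le
        intro ha
        intro g hg
        refine ⟨Lv_one_all g, fun i hi => ?_⟩
        exact Xroot_tc hg i (by rcases ha with h | h <;> omega)
    exact fun i h1 h2 => (hle hg).2 i ⟨h1, h2⟩
  · intro hmid
    set f : ℕ → ZMod p := fun a => tc g a with hf
    set P : UU p (d+1) := Pprod 1 f (d+1) with hP
    have hPmem : P ∈ Hsub p d k := by
      apply Pprod_mem
      intro a ha h
      by_cases hmid' : k ≤ a ∧ a < d - k
      · have : f a = 0 := hmid a hmid'.1 hmid'.2
        rw [this, xr_zero]
        exact Subgroup.one_mem _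
      · have had : a < d := by omega
        exact Xroot_le_Hsub (k := k) (a := ⟨a, had⟩) (by simp at hmid' ⊢; omega)
          (xr_mem_Xroot had (f a))
    have hrest : P⁻¹ * g ∈ Gs p (d+1) 2 := by
      intro i j hj
      rcases Nat.lt_or_ge j (i + 1) with hji | hji
      · exact Lv_one_all _ i j hji
      · have hje : j = i + 1 := by omega
        subst hje
        rw [L1 le_rfl le_rfl (Lv_one_all _) (Lv_one_all _) (by omega), en_one_ne (by omega)]
        have h1 : ev (P⁻¹) i (i+1) = - ev P i (i+1) := ev_inv le_rfl (Lv_one_all P) i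
        rw [h1, hP, Pprod_ev le_rfl]
        by_cases h2 : i + 1 < d + 1
        · rw [if_pos ⟨by omega, h2⟩]
          show -(tc g i) + tc g i - 0 = 0
          ring
        · rw [if_neg (by omega)]
          show -0 + ev g i (i+1) - 0 = 0
          rw [ev, en_out _ (by omega)]
          ring
    have : g = P * (P⁻¹ * g) := by group
    rw [this]
    exact Subgroup.mul_mem _ hPmem (Gs2_le_Hsub k hrest)

end UTC

namespace UTC
variable {p n : ℕ} [Fact p.Prime]

lemma lcs_map {G : Type*} [Group G] (φ : G ≃* G) (m : ℕ) :
    (Subgroup.lowerCentralSeries (⊤ : Subgroup G) m).map φ.toMonoidHom = Subgroup.lowerCentralSeries (⊤ : Subgroup G) m := by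
  induction m with
  | zero =>
    show Subgroup.map φ.toMonoidHom ⊤ = ⊤
    rw [Subgroup.map_top_of_surjective _ φ.surjective]
  | succ m ih =>
    show Subgroup.map φ.toMonoidHom ⁅Subgroup.lowerCentralSeries (⊤ : Subgroup G) m, ⊤⁆ = ⁅Subgroup.lowerCentralSeries (⊤ : Subgroup G) m, ⊤⁆
    rw [Subgroup.map_commutator, ih, Subgroup.map_top_of_surjective _ φ.surjective]

lemma lcs_stab {G : Type*} [Group G] (φ : G ≃* G) {m : ℕ} {g : G}
    (hg : g ∈ Subgroup.lowerCentralSeries (⊤ : Subgroup G) m) : φ g ∈ Subgroup.lowerCentralSeries (⊤ : Subgroup G) m := by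
  rw [← lcs_map φ m]
  exact ⟨g, hg, rfl⟩

lemma Gs_stab (φ : UU p n ≃* UU p n) {m : ℕ} (hm : 1 ≤ m) {g : UU p n}
    (hg : g ∈ Gs p n m) : φ g ∈ Gs p n m := by
  obtain ⟨m, rfl⟩ : ∃ m', m = m' + 1 := ⟨m - 1, by omega⟩
  rw [Gs_eq_lcs] at hg ⊢
  exact lcs_stab φ hg

lemma cent_stab (φ : UU p n ≃* UU p n) {m : ℕ} (hm : 1 ≤ m) {g : UU p n}
    (hg : g ∈ Subgroup.centralizer (Gs p n m : Set (UU p n))) :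
    φ g ∈ Subgroup.centralizer (Gs p n m : Set (UU p n)) := by
  rw [Subgroup.mem_centralizer_iff] at hg ⊢
  intro h hh
  have h1 : φ.symm h ∈ Gs p n m := Gs_stab φ.symm hm hh
  have := hg (φ.symm h) h1
  have h2 := congrArg φ this
  simpa using h2

/-- exact product formula against a root element on the right -/
lemma ev_mul_xr (g : UU p n) {α β : ℕ} (hab : α < β) (hb : β < n) (t : ZMod p)
    {i j : ℕ} (hj : j < n) :
    ev (g * xr α β hab hb t) i j = ev g i j + (if β = j then ev g i α * t else 0) := by
  by_cases hi : i < n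
  · rw [ev_mul]
    have hterm : ∀ l, ev g i l * ev (xr α β hab hb t) l j
        = ev g i l * en (1 : M p n) l j + (if α = l ∧ β = j then ev g i l * t else 0) := by
      intro l
      rw [ev_xr]
      by_cases h : α = l ∧ β = j
      · rw [if_pos h, if_pos h]; ring
      · rw [if_neg h, if_neg h]; ring
    rw [Finset.sum_congr rfl (fun l _ => hterm l), Finset.sum_add_distrib]
    congr 1
    · rw [Finset.sum_eq_single_of_mem j (Finset.mem_range.mpr hj)]
      · rw [en_one_diag hj, mul_one]
      · intro l _ hlj
        rw [en_one_ne hlj, mul_zero]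
    · by_cases hβj : β = j
      · rw [if_pos hβj, Finset.sum_eq_single_of_mem α (Finset.mem_range.mpr (by omega))]
        · rw [if_pos ⟨rfl, hβj⟩]
        · intro l _ hlα
          rw [if_neg (by tauto)]
      · rw [if_neg hβj]
        apply Finset.sum_eq_zero
        intro l _
        rw [if_neg (by tauto)]
  · rw [ev, en_out _ (by omega), ev, en_out _ (by omega), ev, en_out _ (by omega)]
    simp

/-- exact product formula against a root element on the left -/
lemma ev_xr_mul (g : UU p n) {α β : ℕ} (hab : α < β) (hb : β < n) (t : ZMod p)
    {i j : ℕ} (hi : i < n) :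
    ev (xr α β hab hb t * g) i j = ev g i j + (if α = i then t * ev g β j else 0) := by
  by_cases hjn : j < n
  · rw [ev_mul]
    have hterm : ∀ l, ev (xr α β hab hb t) i l * ev g l j
        = en (1 : M p n) i l * ev g l j + (if α = i ∧ β = l then t * ev g l j else 0) := by
      intro l
      rw [ev_xr]
      by_cases h : α = i ∧ β = l
      · rw [if_pos ⟨h.1, h.2⟩, if_pos h]; ring
      · have : ¬(α = i ∧ β = l) := h
        rw [if_neg this, if_neg h]; ring
    rw [Finset.sum_congr rfl (fun l _ => hterm l), Finset.sum_add_distrib]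
    congr 1
    · rw [Finset.sum_eq_single_of_mem i (Finset.mem_range.mpr hi)]
      · rw [en_one_diag hi, one_mul]
      · intro l _ hli
        rw [en_one_ne (Ne.symm hli), zero_mul]
    · by_cases hαi : α = i
      · rw [if_pos hαi, Finset.sum_eq_single_of_mem β (Finset.mem_range.mpr hb)]
        · rw [if_pos ⟨hαi, rfl⟩]
        · intro l _ hlβ
          rw [if_neg (by tauto)]
      · rw [if_neg hαi]
        apply Finset.sum_eq_zero
        intro l _
        rw [if_neg (by tauto)]
  · rw [ev, en_out _ (by omega), ev, en_out _ (by omega), ev, en_out _ (by omega)]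
    simp

/-- Description of the centralizer of `Gs m` (for `1 ≤ m ≤ n - 1`). -/
lemma mem_cent_iff {m : ℕ} (hm : 1 ≤ m) (hmn : m ≤ n - 1) {g : UU p n} :
    g ∈ Subgroup.centralizer (Gs p n m : Set (UU p n))
      ↔ (∀ i α : ℕ, α + m ≤ n - 1 → i < α → ev g i α = 0)
        ∧ (∀ β j : ℕ, m ≤ β → β < j → ev g β j = 0) := by
  constructor
  · intro hc
    rw [Subgroup.mem_centralizer_iff] at hc
    constructor
    · intro i α hα hiα
      have hβ : α + m < n := by omega
      have hX : xr α (α + m) (by omega) hβ 1 ∈ Gs p n m := xr_mem_Gs _ _ _ _ _ le_rfl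
      have := hc _ hX
      have h2 := congrArg (fun x => ev x i (α + m)) this
      rw [ev_mul_xr _ _ _ _ (by omega), ev_xr_mul _ _ _ _ (by omega)] at h2
      rw [if_pos rfl, if_neg (by omega)] at h2
      have : ev g i α = 0 := by linear_combination -h2
      exact this
    · intro β j hβ hβj
      by_cases hjn : j < n
      · have hα : β - m < β := by omega
        have hX : xr (β - m) β hα (by omega) 1 ∈ Gs p n m :=
          xr_mem_Gs _ _ _ _ _ (by omega)
        have := hc _ hX
        have h2 := congrArg (fun x => ev x (β - m) j) this
        rw [ev_mul_xr _ _ _ _ hjn, ev_xr_mul _ _ _ _ (by omega)] at h2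
        rw [if_pos rfl, if_neg (by omega)] at h2
        have : ev g β j = 0 := by linear_combination h2
        exact this
      · rw [ev, en_out _ (by omega)]
  · rintro ⟨hcol, hrow⟩
    rw [Subgroup.mem_centralizer_iff]
    intro h hh
    apply ev_ext
    intro i j
    by_cases hr : i < n ∧ j < n
    · rw [ev_mul, ev_mul]
      have lhs : ∑ l ∈ Finset.range n, ev h i l * ev g l j
          = ev g i j + (ev h i j - en (1 : M p n) i j) := by
        have hterm : ∀ l, ev h i l * ev g l j
            = en (1 : M p n) i l * ev g l j + (ev h i l - en (1 : M p n) i l) * ev g l j := by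
          intro l; ring
        rw [Finset.sum_congr rfl (fun l _ => hterm l), Finset.sum_add_distrib]
        congr 1
        · rw [Finset.sum_eq_single_of_mem i (Finset.mem_range.mpr hr.1)]
          · rw [en_one_diag hr.1, one_mul]
          · intro l _ hli
            rw [en_one_ne (Ne.symm hli), zero_mul]
        · rw [Finset.sum_eq_single_of_mem j (Finset.mem_range.mpr hr.2)]
          · rw [ev_diag g hr.2, mul_one]
          · intro l _ hlj
            rcases Nat.lt_or_ge l (i + m) with hl | hl
            · rw [hh i l hl]; ring
            · -- l ≥ i + m ≥ m, and l ≠ j: if j > l then row condition kills ev g l j,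
              -- if j < l then triangularity kills it
              rcases Nat.lt_or_ge l j with h1 | h1
              · rw [hrow l j (by omega) h1, mul_zero]
              · rw [ev_low g (by omega), mul_zero]
      have rhs : ∑ l ∈ Finset.range n, ev g i l * ev h l j
          = ev g i j + (ev h i j - en (1 : M p n) i j) := by
        have hterm : ∀ l, ev g i l * ev h l j
            = ev g i l * en (1 : M p n) l j + ev g i l * (ev h l j - en (1 : M p n) l j) := by
          intro l; ring
        rw [Finset.sum_congr rfl (fun l _ => hterm l), Finset.sum_add_distrib]
        congr 1
        · rw [Finset.sum_eq_single_of_mem j (Finset.mem_range.mpr hr.2)]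
          · rw [en_one_diag hr.2, mul_one]
          · intro l _ hlj
            rw [en_one_ne hlj, mul_zero]
        · rw [Finset.sum_eq_single_of_mem i (Finset.mem_range.mpr hr.1)]
          · rw [ev_diag g hr.1, one_mul]
          · intro l _ hli
            have hcl : ev h l j - en (1 : M p n) l j = 0 ∨ (l + m ≤ j) := by
              rcases Nat.lt_or_ge j (l + m) with h1 | h1
              · left; rw [hh l j h1]; ring
              · right; exact h1
            rcases hcl with h1 | h1
            · rw [h1, mul_zero]
            · rcases Nat.lt_or_ge l i with h2 | h2
              · rw [ev_low g h2, zero_mul]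
              · have h3 : i < l := by omega
                rw [hcol i l (by omega) h3, zero_mul]
      rw [lhs, rhs]
    · rw [ev, en_out _ hr, ev, en_out _ hr]
  
end UTC

namespace UTC
variable {p n : ℕ} [Fact p.Prime]

/-- commutator entries on the second superdiagonal -/
lemma sc_comm (g h : UU p n) (a : ℕ) :
    ev ⁅g, h⁆ a (a + 2) = ev g a (a+1) * ev h (a+1) (a+2) - ev h a (a+1) * ev g (a+1) (a+2) := by
  have := ev_comm (a := 1) (b := 1) le_rfl le_rfl (Lv_one_all g) (Lv_one_all h) a
  simpa using this

/-- commutator entries on the third superdiagonal, second entry in `Gs 2` -/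
lemma rc_comm (g h : UU p n) (hh : h ∈ Gs p n 2) (a : ℕ) :
    ev ⁅g, h⁆ a (a + 3) = ev g a (a+1) * ev h (a+1) (a+3) - ev h a (a+2) * ev g (a+2) (a+3) := by
  have := ev_comm (a := 1) (b := 2) le_rfl (by omega) (Lv_one_all g) hh a
  have e : a + 1 + 2 = a + 3 := by omega
  rw [e] at this
  simpa using this

lemma mem_Gs3_iff {g : UU p n} : g ∈ Gs p n 3 ↔ Lv 2 g ∧ ∀ a, ev g a (a+2) = 0 := by
  constructor
  · intro hg
    exact ⟨Lv_mono (by omega) hg, fun a => by rw [hg a (a+2) (by omega), en_one_ne (by omega)]⟩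
  · rintro ⟨h1, h2⟩ i j hj
    rcases Nat.lt_or_ge j (i + 2) with h | h
    · exact h1 i j h
    · have : j = i + 2 := by omega
      subst this
      rw [h2 i, en_one_ne (by omega)]

lemma mem_Gs4_iff {g : UU p n} : g ∈ Gs p n 4 ↔ Lv 3 g ∧ ∀ a, ev g a (a+3) = 0 := by
  constructor
  · intro hg
    exact ⟨Lv_mono (by omega) hg, fun a => by rw [hg a (a+3) (by omega), en_one_ne (by omega)]⟩
  · rintro ⟨h1, h2⟩ i j hj
    rcases Nat.lt_or_ge j (i + 3) with h | h
    · exact h1 i j h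
    · have : j = i + 3 := by omega
      subst this
      rw [h2 i, en_one_ne (by omega)]

/-- If a subgroup is stable under all automorphisms, its image under any automorphism is
itself. -/
lemma map_eq_of_stab (S : Subgroup (UU p n))
    (hstab : ∀ (ψ : UU p n ≃* UU p n) g, g ∈ S → ψ g ∈ S) (φ : UU p n ≃* UU p n) :
    S.map φ.toMonoidHom = S := by
  apply le_antisymm
  · rintro g ⟨g', hg', rfl⟩
    exact hstab φ g' hg'
  · intro g hg
    exact ⟨φ.symm g, hstab φ.symm g hg, by simp⟩

end UTC

namespace UTC
variable {p d : ℕ} [Fact p.Prime]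

abbrev Cg (p d : ℕ) [Fact p.Prime] (m : ℕ) : Subgroup (UU p (d+1)) :=
  Subgroup.centralizer (Gs p (d+1) m : Set (UU p (d+1)))

lemma cent_tc {m : ℕ} (hm : 1 ≤ m) (hmd : m ≤ d) {g : UU p (d+1)}
    (hg : g ∈ Cg p d m) {i : ℕ} (hi : i + m < d ∨ m ≤ i) : tc g i = 0 := by
  rw [mem_cent_iff hm (by omega)] at hg
  rcases hi with h | h
  · exact hg.1 i (i+1) (by omega) (by omega)
  · exact hg.2 i (i+1) h (by omega)

lemma tc_xr {i a : ℕ} (h1 : i < i + 1) (h2 : i + 1 < d + 1) (t : ZMod p) :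
    tc (xr i (i+1) h1 h2 t : UU p (d+1)) a = if i = a then t else 0 := by
  rw [tc, ev_xr, en_one_ne (by omega)]
  by_cases h : i = a
  · subst h; simp
  · have : ¬(i = a ∧ i + 1 = a + 1) := by omega
    simp [h, this]

lemma xr_mem_cent {m i : ℕ} (hm : 1 ≤ m) (hmd : m ≤ d) (h2 : i + 1 < d + 1) (t : ZMod p)
    (hlo : d - m ≤ i) (hhi : i ≤ m - 1) :
    (xr i (i+1) (by omega) h2 t : UU p (d+1)) ∈ Cg p d m := by
  rw [mem_cent_iff hm (by omega)]
  constructor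
  · intro i' α hα hi'
    rw [ev_xr, en_one_ne (by omega)]
    have : ¬(i = i' ∧ i + 1 = α) := by omega
    simp [this]
  · intro β j hβ hβj
    rw [ev_xr, en_one_ne (by omega)]
    have : ¬(i = β ∧ i + 1 = j) := by omega
    simp [this]

/-- the first-order condition cutting out `Hsub` in the generic case -/
def S1cond (k : ℕ) (A : UU p (d+1)) : Prop :=
  ∀ X ∈ Cg p d (d - k - 1), ⁅A, X⁆ ∈ Gs p (d+1) 3

lemma sc_comm_xr (A : UU p (d+1)) {α : ℕ} (h1 : α < α + 1) (h2 : α + 1 < d + 1)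
    (t : ZMod p) (a : ℕ) :
    ev ⁅A, (xr α (α+1) h1 h2 t : UU p (d+1))⁆ a (a+2)
      = tc A a * (if α = a + 1 then t else 0) - (if α = a then t else 0) * tc A (a+1) := by
  rw [sc_comm, ev_xr, ev_xr, en_one_ne (by omega), en_one_ne (by omega)]
  have e1 : (α = a + 1 ∧ α + 1 = a + 1 + 1) ↔ α = a + 1 := by omega
  have e2 : (α = a ∧ α + 1 = a + 1) ↔ α = a := by omega
  rw [if_congr e1 rfl rfl, if_congr e2 rfl rfl, zero_add, zero_add]
  rfl

lemma S1cond_iff_memHsub {k : ℕ} (hw : 2*k + 4 ≤ d) {A : UU p (d+1)} :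
    S1cond k A ↔ A ∈ Hsub p d k := by
  have hm1 : 1 ≤ d - k - 1 := by omega
  have hmd : d - k - 1 ≤ d := by omega
  rw [mem_Hsub_iff]
  constructor
  · intro hS i hki hid
    rcases Nat.lt_or_ge i (d - k - 2) with hcase | hcase
    · -- use X = xr (i+1) (i+2)
      have hX : (xr (i+1) (i+1+1) (by omega) (by omega) 1 : UU p (d+1)) ∈ Cg p d (d-k-1) :=
        xr_mem_cent hm1 hmd (by omega) 1 (by omega) (by omega)
      have h3 := (mem_Gs3_iff.mp (hS _ hX)).2 i
      rw [sc_comm_xr] at h3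
      rw [if_pos rfl, if_neg (by omega)] at h3
      have h4 : tc A i * 1 = 0 := by linear_combination h3
      linear_combination h4
    · -- i ≥ d - k - 2 ≥ k + 2, use X = xr (i-1) i
      obtain ⟨j, rfl⟩ : ∃ j, i = j + 1 := ⟨i - 1, by omega⟩
      have hX : (xr j (j+1) (by omega) (by omega) 1 : UU p (d+1)) ∈ Cg p d (d-k-1) :=
        xr_mem_cent hm1 hmd (by omega) 1 (by omega) (by omega)
      have h3 := (mem_Gs3_iff.mp (hS _ hX)).2 j
      rw [sc_comm_xr] at h3
      rw [if_pos rfl, if_neg (by omega)] at h3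
      have h4 : (1 : ZMod p) * tc A (j+1) = 0 := by linear_combination -h3
      linear_combination h4
  · intro hmid X hX
    rw [mem_Gs3_iff]
    refine ⟨Lv_comm le_rfl le_rfl (Lv_one_all A) (Lv_one_all X), fun a => ?_⟩
    rw [sc_comm]
    have hX1 : ∀ j, (j + (d-k-1) < d ∨ d - k - 1 ≤ j) → tc X j = 0 :=
      fun j hj => cent_tc hm1 hmd hX hj
    show tc A a * tc X (a+1) - tc X a * tc A (a+1) = 0
    by_cases h1 : k + 1 ≤ a + 1 ∧ a + 1 ≤ d - k - 2
    · -- tc X (a+1) may be nonzero; then a is in the middle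
      have : tc A a = 0 := hmid a (by omega) (by omega)
      rw [this, zero_mul]
      by_cases h2 : k + 1 ≤ a ∧ a ≤ d - k - 2
      · have : tc A (a+1) = 0 := hmid (a+1) (by omega) (by omega)
        rw [this, mul_zero]; ring
      · rw [hX1 a (by omega), zero_mul]; ring
    · rw [hX1 (a+1) (by omega), mul_zero]
      by_cases h2 : k + 1 ≤ a ∧ a ≤ d - k - 2
      · have : tc A (a+1) = 0 := hmid (a+1) (by omega) (by omega)
        rw [this, mul_zero]; ring
      · rw [hX1 a (by omega), zero_mul]; ring

end UTC

namespace UTC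
variable {p d : ℕ} [Fact p.Prime]

lemma key_gen {k : ℕ} (hw : 2*k + 4 ≤ d) (φ : UU p (d+1) ≃* UU p (d+1)) {A : UU p (d+1)}
    (hA : A ∈ Hsub p d k) : φ A ∈ Hsub p d k := by
  rw [← S1cond_iff_memHsub hw] at hA ⊢
  intro X hX
  have hY : φ.symm X ∈ Cg p d (d - k - 1) := cent_stab φ.symm (by omega) hX
  have h2 : φ ⁅A, φ.symm X⁆ ∈ Gs p (d+1) 3 := Gs_stab φ (by omega) (hA _ hY)
  rwa [map_commutatorElement, MulEquiv.apply_symm_apply] at h2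

lemma mem_Gs2_iff_tc {g : UU p (d+1)} : g ∈ Gs p (d+1) 2 ↔ ∀ i, tc g i = 0 := by
  constructor
  · intro hg i
    rw [tc, hg i (i+1) (by omega), en_one_ne (by omega)]
  · intro h i j hj
    rcases Nat.lt_or_ge j (i+1) with h1 | h1
    · exact Lv_one_all g i j h1
    · have : j = i + 1 := by omega
      subst this
      rw [show ev g i (i+1) = tc g i from rfl, h i, en_one_ne (by omega)]

/-- generic description of `⁅J, Gs 2⁆ ⊔ Gs 4` when `J` has prescribed zero `tc`-entries. -/
lemma T3_desc (J : Subgroup (UU p (d+1))) (Pbad : ℕ → Prop)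
    (hsupp : ∀ u ∈ J, ∀ a : ℕ, Pbad a → tc u a = 0 ∧ tc u (a+2) = 0)
    (hgen : ∀ a : ℕ, ¬ Pbad a → ∀ (h3 : a + 3 < d + 1) (v : ZMod p),
        (xr a (a+3) (by omega) h3 v : UU p (d+1))
          ∈ (⁅J, Gs p (d+1) 2⁆ ⊔ Gs p (d+1) 4 : Subgroup (UU p (d+1)))) :
    (⁅J, Gs p (d+1) 2⁆ ⊔ Gs p (d+1) 4 : Subgroup (UU p (d+1)))
      = Kker 3 (by omega) Pbad := by
  apply le_antisymm
  · apply sup_le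
    · rw [Subgroup.commutator_le]
      intro u hu v hv
      refine ⟨Lv_comm le_rfl (by omega) (Lv_one_all u) hv, fun a ha => ?_⟩
      rw [rc_comm u v hv a]
      rw [show ev u a (a+1) = tc u a from rfl,
        show ev u (a+2) (a+2+1) = tc u (a+2) from rfl,
        (hsupp u hu a ha).1, (hsupp u hu a ha).2]
      ring
    · intro g hg
      refine ⟨Lv_mono (by omega) hg, fun a _ => ?_⟩
      rw [hg a (a+3) (by omega), en_one_ne (by omega)]
  · rintro g ⟨hLv, hzero⟩
    set f : ℕ → ZMod p := fun a => ev g a (a+3) with hf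
    set T := (⁅J, Gs p (d+1) 2⁆ ⊔ Gs p (d+1) 4 : Subgroup (UU p (d+1))) with hT
    have hPT : Pprod 3 f (d+1) ∈ T := by
      apply Pprod_mem
      intro a _ h
      by_cases hbad : Pbad a
      · have : f a = 0 := hzero a hbad
        rw [this, xr_zero]
        exact Subgroup.one_mem _
      · exact hgen a hbad h.2 (f a)
    have hrest : (Pprod 3 f (d+1) : UU p (d+1))⁻¹ * g ∈ Gs p (d+1) 4 := by
      have h3 : (1:ℕ) ≤ 3 := by omega
      have hPG : (Pprod 3 f (d+1) : UU p (d+1)) ∈ Gs p (d+1) 3 := Pprod_mem_Gs h3 f (d+1)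
      have hPI : (Pprod 3 f (d+1) : UU p (d+1))⁻¹ ∈ Gs p (d+1) 3 := Lv_inv hPG
      rw [mem_Gs4_iff]
      refine ⟨fun i j hj => ?_, fun a => ?_⟩
      · rcases Nat.lt_or_ge j (i+3) with h1 | h1
        · rw [L1 h3 h3 hPI hLv (by omega), hPI i j h1, hLv i j h1]; ring
        · have : j = i + 3 := by omega
          subst this
          rw [L1 h3 h3 hPI hLv (by omega), en_one_ne (by omega)]
          rw [show ev (Pprod 3 f (d+1) : UU p (d+1))⁻¹ i (i+3)
            = - ev (Pprod 3 f (d+1) : UU p (d+1)) i (i+3) from ev_inv h3 hPG i]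
          rw [Pprod_ev h3]
          by_cases h2 : i + 3 < d + 1
          · rw [if_pos ⟨by omega, h2⟩]
            show -(f i) + f i - 0 = 0
            ring
          · rw [if_neg (by omega)]
            rw [show ev g i (i+3) = 0 from by rw [ev, en_out _ (by omega)]]
            ring
      · rw [L1 h3 h3 hPI hLv (by omega)]
        rw [show ev (Pprod 3 f (d+1) : UU p (d+1))⁻¹ a (a+3)
          = - ev (Pprod 3 f (d+1) : UU p (d+1)) a (a+3) from ev_inv h3 hPG a]
        rw [Pprod_ev h3, en_one_ne (by omega)]
        by_cases h2 : a + 3 < d + 1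
        · rw [if_pos ⟨by omega, h2⟩]
          show -(f a) + f a - 0 = 0
          ring
        · rw [if_neg (by omega)]
          rw [show ev g a (a+3) = 0 from by rw [ev, en_out _ (by omega)]]
          ring
    have : g = Pprod 3 f (d+1) * ((Pprod 3 f (d+1) : UU p (d+1))⁻¹ * g) := by group
    rw [this]
    exact Subgroup.mul_mem _ hPT (le_sup_right (α := Subgroup (UU p (d+1))) hrest)

lemma two_ne_zero' (hp : 3 ≤ p) : (2 : ZMod p) ≠ 0 := by
  have : ((2 : ℕ) : ZMod p) ≠ 0 := by
    rw [Ne, ZMod.natCast_eq_zero_iff]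
    intro h
    have := Nat.le_of_dvd (by omega) h
    omega
  simpa using this

lemma exists_off (hp : 3 ≤ p) (x : ZMod p) : ∃ u : ZMod p, u ≠ 0 ∧ x + u ≠ 0 := by
  by_cases h : x + 1 = 0
  · refine ⟨2, two_ne_zero' hp, ?_⟩
    intro h2
    have : (1 : ZMod p) = 0 := by linear_combination h2 - h
    simpa using this
  · exact ⟨1, one_ne_zero, h⟩

end UTC

namespace UTC
variable {p d : ℕ} [Fact p.Prime]

/-- the characteristic subgroup `{A : tc A b = tc A (b+2) = 0}` (for `d = 2b+3`) -/
def U1 (p d : ℕ) [Fact p.Prime] (b : ℕ) : Subgroup (UU p (d+1)) :=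
  Kker 1 le_rfl (fun i => i = b ∨ i = b + 2)

lemma mem_U1 {b : ℕ} {A : UU p (d+1)} :
    A ∈ U1 p d b ↔ tc A b = 0 ∧ tc A (b+2) = 0 := by
  constructor
  · rintro ⟨h1, h2⟩
    exact ⟨h2 b (Or.inl rfl), h2 (b+2) (Or.inr rfl)⟩
  · rintro ⟨h1, h2⟩
    refine ⟨Lv_one_all A, fun i hi => ?_⟩
    rcases hi with rfl | rfl
    · exact h1
    · exact h2

lemma U1_iff {b : ℕ} (hd : d = 2*b + 3) {A : UU p (d+1)} :
    A ∈ U1 p d b ↔ ∀ X ∈ Cg p d (b+2), ⁅A, X⁆ ∈ Gs p (d+1) 3 := by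
  constructor
  · intro hA X hX
    rw [mem_U1] at hA
    have hXs : ∀ j, j ≠ b + 1 → tc X j = 0 := by
      intro j hj
      exact cent_tc (by omega) (by omega) hX (by omega)
    rw [mem_Gs3_iff]
    refine ⟨Lv_comm le_rfl le_rfl (Lv_one_all A) (Lv_one_all X), fun a => ?_⟩
    rw [sc_comm]
    show tc A a * tc X (a+1) - tc X a * tc A (a+1) = 0
    by_cases h1 : a = b
    · rw [h1, hA.1, hXs b (by omega)]; ring
    · by_cases h2 : a = b + 1
      · rw [h2, show b+1+1 = b+2 from rfl, hA.2, hXs (b+2) (by omega)]; ring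
      · rw [hXs a (by omega), hXs (a+1) (by omega)]; ring
  · intro h
    have hX : (xr (b+1) (b+1+1) (by omega) (by omega) 1 : UU p (d+1)) ∈ Cg p d (b+2) :=
      xr_mem_cent (by omega) (by omega) (by omega) 1 (by omega) (by omega)
    have h1 := (mem_Gs3_iff.mp (h _ hX)).2 b
    have h2 := (mem_Gs3_iff.mp (h _ hX)).2 (b+1)
    rw [sc_comm_xr, if_pos rfl, if_neg (by omega)] at h1
    rw [sc_comm_xr, if_pos rfl, if_neg (by omega)] at h2
    rw [mem_U1]
    constructor
    · have : tc A b * 1 = 0 := by linear_combination h1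
      linear_combination this
    · have : (1 : ZMod p) * tc A (b+1+1) = 0 := by linear_combination -h2
      have h3 : tc A (b+1+1) = 0 := by linear_combination this
      exact h3

lemma U1_stab {b : ℕ} (hd : d = 2*b + 3) (φ : UU p (d+1) ≃* UU p (d+1)) {A : UU p (d+1)}
    (hA : A ∈ U1 p d b) : φ A ∈ U1 p d b := by
  rw [U1_iff hd] at hA ⊢
  intro X hX
  have hY : φ.symm X ∈ Cg p d (b+2) := cent_stab φ.symm (by omega) hX
  have h2 : φ ⁅A, φ.symm X⁆ ∈ Gs p (d+1) 3 := Gs_stab φ (by omega) (hA _ hY)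
  rwa [map_commutatorElement, MulEquiv.apply_symm_apply] at h2

def T3 (p d : ℕ) [Fact p.Prime] (b : ℕ) : Subgroup (UU p (d+1)) :=
  ⁅U1 p d b, Gs p (d+1) 2⁆ ⊔ Gs p (d+1) 4

lemma T3_eq {b : ℕ} (hd : d = 2*b + 3) :
    T3 p d b = Kker 3 (by omega) (fun a => a = b) := by
  apply T3_desc
  · intro u hu a ha
    rw [mem_U1] at hu
    rw [ha]
    exact hu
  · intro a ha h3 v
    by_cases h2 : a = b + 2
    · subst h2
      have hcomm := xr_comm (b+2) (b+4) (b+5) (by omega) (by omega)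
        (show b + 5 < d + 1 by omega) v 1
      have e : xr (b+2) (b+5) (by omega) (show b + 5 < d + 1 by omega) (v * 1)
          = xr (b+2) (b+2+3) (by omega) (show b+2+3 < d+1 by omega) v := by
        rw [mul_one]
      rw [e] at hcomm
      rw [← hcomm]
      apply le_sup_left (α := Subgroup (UU p (d+1)))
      rw [Subgroup.commutator_comm]
      apply Subgroup.commutator_mem_commutator
      · exact xr_mem_Gs _ _ _ _ _ (by omega)
      · rw [show (xr (b+4) (b+5) (by omega) (show b+5<d+1 by omega) 1 : UU p (d+1))
            = xr (b+4) (b+4+1) (by omega) (show b+4+1<d+1 by omega) 1 from rfl]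
        rw [mem_U1, tc_xr, tc_xr]
        constructor <;> (rw [if_neg (by omega)])
    · have hcomm := xr_comm a (a+1) (a+3) (by omega) (by omega)
        (show a + 3 < d + 1 from h3) v 1
      have e : xr a (a+3) (by omega) h3 (v * 1) = xr a (a+3) (by omega) h3 v := by rw [mul_one]
      rw [e] at hcomm
      rw [← hcomm]
      apply le_sup_left (α := Subgroup (UU p (d+1)))
      apply Subgroup.commutator_mem_commutator
      · rw [mem_U1, tc_xr, tc_xr]
        constructor <;> (rw [if_neg (by omega)])
      · exact xr_mem_Gs _ _ _ _ _ (by omega)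

lemma T3_stab {b : ℕ} (hd : d = 2*b + 3) (φ : UU p (d+1) ≃* UU p (d+1)) {g : UU p (d+1)}
    (hg : g ∈ T3 p d b) : φ g ∈ T3 p d b := by
  have hmap : (T3 p d b).map φ.toMonoidHom = T3 p d b := by
    unfold T3
    rw [Subgroup.map_sup, Subgroup.map_commutator,
      map_eq_of_stab (U1 p d b) (fun ψ g hg => U1_stab hd ψ hg) φ,
      map_eq_of_stab (Gs p (d+1) 2) (fun ψ g hg => Gs_stab ψ (by omega) hg) φ,
      map_eq_of_stab (Gs p (d+1) 4) (fun ψ g hg => Gs_stab ψ (by omega) hg) φ]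
  rw [← hmap]
  exact ⟨g, hg, rfl⟩

/-- The crucial second-order condition for the odd case. -/
def SOcond (b : ℕ) (A : UU p (d+1)) : Prop :=
  ∀ X ∈ Cg p d (b+3), ⁅A, ⁅A, X⁆⁆ ∈ T3 p d b

lemma SO_val {b : ℕ} (A X : UU p (d+1)) :
    ev ⁅A, ⁅A, X⁆⁆ b (b+3)
      = tc A b * tc A (b+1) * tc X (b+2) - 2 * (tc A b * tc A (b+2)) * tc X (b+1)
        + tc A (b+1) * tc A (b+2) * tc X b := by
  have hY : ⁅A, X⁆ ∈ Gs p (d+1) 2 :=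
    Lv_comm le_rfl le_rfl (Lv_one_all A) (Lv_one_all X)
  rw [rc_comm A ⁅A, X⁆ hY b]
  have e1 : ev ⁅A, X⁆ (b+1) (b+3) = tc A (b+1) * tc X (b+2) - tc X (b+1) * tc A (b+2) := by
    have := sc_comm A X (b+1)
    rw [show b+1+2 = b+3 from rfl] at this
    exact this
  have e2 : ev ⁅A, X⁆ b (b+2) = tc A b * tc X (b+1) - tc X b * tc A (b+1) := sc_comm A X b
  rw [e1, e2]
  show tc A b * _ - _ * tc A (b+2) = _
  ring

lemma SO_iff (hp : 3 ≤ p) {b : ℕ} (hd : d = 2*b + 3) {A : UU p (d+1)} :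
    SOcond b A ↔ (tc A b * tc A (b+1) = 0 ∧ tc A b * tc A (b+2) = 0
      ∧ tc A (b+1) * tc A (b+2) = 0) := by
  constructor
  · intro hA
    have hmem : ∀ (i : ℕ) (hi1 : i < i + 1) (hi2 : i+1 < d+1), b ≤ i → i ≤ b + 2 →
        ev ⁅A, ⁅A, (xr i (i+1) hi1 hi2 1 : UU p (d+1))⁆⁆ b (b+3) = 0 := by
      intro i hi1 hi2 hbi hib
      have hX : (xr i (i+1) hi1 hi2 1 : UU p (d+1)) ∈ Cg p d (b+3) :=
        xr_mem_cent (by omega) (by omega) hi2 1 (by omega) (by omega)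
      have := hA _ hX
      rw [T3_eq hd] at this
      exact this.2 b rfl
    have h2 : (2 : ZMod p) ≠ 0 := two_ne_zero' hp
    have k0 := hmem b (by omega) (by omega) le_rfl (by omega)
    have k1 := hmem (b+1) (by omega) (by omega) (by omega) (by omega)
    have k2 := hmem (b+2) (by omega) (by omega) (by omega) (by omega)
    rw [SO_val] at k0 k1 k2
    rw [show (xr b (b+1) (by omega) (by omega) 1 : UU p (d+1))
      = xr b (b+1) (by omega) (by omega) 1 from rfl] at k0
    rw [tc_xr, tc_xr, tc_xr, if_neg (by omega), if_neg (by omega), if_pos rfl] at k0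
    rw [tc_xr, tc_xr, tc_xr, if_neg (by omega), if_pos rfl, if_neg (by omega)] at k1
    rw [tc_xr, tc_xr, tc_xr, if_pos rfl, if_neg (by omega), if_neg (by omega)] at k2
    refine ⟨?_, ?_, ?_⟩
    · linear_combination k2
    · have : (2 : ZMod p) * (tc A b * tc A (b+2)) = 0 := by linear_combination -k1
      rcases mul_eq_zero.mp this with h | h
      · exact absurd h h2
      · exact h
    · linear_combination k0
  · rintro ⟨e1, e2, e3⟩ X hX
    rw [T3_eq hd]
    refine ⟨Lv_comm le_rfl (by omega) (Lv_one_all A)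
      (Lv_comm le_rfl le_rfl (Lv_one_all A) (Lv_one_all X)), fun a ha => ?_⟩
    rw [ha, SO_val]
    linear_combination tc X (b+2) * e1 - 2 * tc X (b+1) * e2 + tc X b * e3

lemma SO_stab {b : ℕ} (hd : d = 2*b + 3) (φ : UU p (d+1) ≃* UU p (d+1)) {A : UU p (d+1)}
    (hA : SOcond b A) : SOcond b (φ A) := by
  intro X hX
  have hY : φ.symm X ∈ Cg p d (b+3) := cent_stab φ.symm (by omega) hX
  have h2 : φ ⁅A, ⁅A, φ.symm X⁆⁆ ∈ T3 p d b := T3_stab hd φ (hA _ hY)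
  rwa [map_commutatorElement, map_commutatorElement, MulEquiv.apply_symm_apply] at h2

lemma w1_half (hp : 3 ≤ p) {b : ℕ} (hd : d = 2*b + 3) (φ : UU p (d+1) ≃* UU p (d+1))
    {B : UU p (d+1)} (hB1 : tc B (b+1) = 0)
    (hside : tc B b = 0 ∨ tc B (b+2) = 0)
    (hnb : ¬ (tc B b = 0 ∧ tc B (b+2) = 0)) : tc (φ B) (b+1) = 0 := by
  have hSO : SOcond b B := by
    rw [SO_iff hp hd]
    refine ⟨by rw [hB1]; ring, ?_, by rw [hB1]; ring⟩
    rcases hside with h | h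
    · rw [h]; ring
    · rw [h]; ring
  have hSO2 := SO_stab hd φ hSO
  rw [SO_iff hp hd] at hSO2
  have hnU : φ B ∉ U1 p d b := by
    intro hmem
    have : B ∈ U1 p d b := by
      have := U1_stab hd φ.symm hmem
      simpa using this
    rw [mem_U1] at this
    exact hnb this
  rw [mem_U1] at hnU
  push_neg at hnU
  by_cases hα : tc (φ B) b = 0
  · have hγ : tc (φ B) (b+2) ≠ 0 := hnU hα
    rcases mul_eq_zero.mp hSO2.2.2 with h | h
    · exact h
    · exact absurd h hγ
  · rcases mul_eq_zero.mp hSO2.1 with h | h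
    · exact absurd h hα
    · exact h

lemma w1_generic (hp : 3 ≤ p) {b : ℕ} (hd : d = 2*b + 3) (φ : UU p (d+1) ≃* UU p (d+1))
    {B : UU p (d+1)} (hB1 : tc B (b+1) = 0) (hB0 : tc B b ≠ 0) (hB2 : tc B (b+2) ≠ 0) :
    tc (φ B) (b+1) = 0 := by
  set B₁ : UU p (d+1) := xr b (b+1) (by omega) (by omega) (tc B b) with hB₁
  have htB₁ : ∀ i, tc B₁ i = if b = i then tc B b else 0 := fun i => tc_xr _ _ _
  have hsplit : B = B₁ * (B₁⁻¹ * B) := by group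
  have ht2 : ∀ i, tc (B₁⁻¹ * B) i = - tc B₁ i + tc B i := by
    intro i
    rw [tc_mul, tc_inv]
  have h1 : tc (φ B₁) (b+1) = 0 := by
    apply w1_half hp hd φ
    · rw [htB₁, if_neg (by omega)]
    · right; rw [htB₁, if_neg (by omega)]
    · rintro ⟨h, -⟩
      rw [htB₁, if_pos rfl] at h
      exact hB0 h
  have h2 : tc (φ (B₁⁻¹ * B)) (b+1) = 0 := by
    apply w1_half hp hd φ
    · rw [ht2, htB₁, if_neg (by omega), hB1]; ring
    · left; rw [ht2, htB₁, if_pos rfl]; ring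
    · rintro ⟨-, h⟩
      rw [ht2, htB₁, if_neg (by omega)] at h
      apply hB2
      linear_combination h
  calc tc (φ B) (b+1) = tc (φ (B₁ * (B₁⁻¹ * B))) (b+1) := by rw [← hsplit]
    _ = tc (φ B₁) (b+1) + tc (φ (B₁⁻¹ * B)) (b+1) := by rw [_root_.map_mul, tc_mul]
    _ = 0 := by rw [h1, h2]; ring

lemma key_w1 (hp : 3 ≤ p) {b : ℕ} (hd : d = 2*b + 3) (φ : UU p (d+1) ≃* UU p (d+1))
    {A : UU p (d+1)} (hA : A ∈ Hsub p d (b+1)) : φ A ∈ Hsub p d (b+1) := by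
  rw [mem_Hsub_iff] at hA ⊢
  have hA1 : tc A (b+1) = 0 := hA (b+1) le_rfl (by omega)
  obtain ⟨u, hu, hxu⟩ := exists_off hp (tc A b)
  obtain ⟨v, hv, hxv⟩ := exists_off hp (tc A (b+2))
  set C : UU p (d+1) := xr b (b+1) (by omega) (by omega) u
      * xr (b+2) (b+3) (by omega) (by omega) v with hC
  have htC : ∀ i, tc C i = (if b = i then u else 0) + (if b + 2 = i then v else 0) := by
    intro i
    rw [hC, tc_mul]
    rw [show (xr (b+2) (b+3) (by omega) (by omega) v : UU p (d+1))
      = xr (b+2) (b+2+1) (by omega) (by omega) v from rfl]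
    rw [tc_xr, tc_xr]
  have hgenC : tc (φ C) (b+1) = 0 := by
    apply w1_generic hp hd φ
    · rw [htC, if_neg (by omega), if_neg (by omega)]; ring
    · rw [htC, if_pos rfl, if_neg (by omega), add_zero]; exact hu
    · rw [htC, if_neg (by omega), if_pos rfl, zero_add]; exact hv
  have hgenAC : tc (φ (A * C)) (b+1) = 0 := by
    apply w1_generic hp hd φ
    · rw [tc_mul, htC, hA1, if_neg (by omega), if_neg (by omega)]; ring
    · rw [tc_mul, htC, if_pos rfl, if_neg (by omega), add_zero]; exact hxu
    · rw [tc_mul, htC, if_neg (by omega), if_pos rfl, zero_add]; exact hxv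
  intro i hi1 hi2
  have hieq : i = b + 1 := by omega
  subst hieq
  have hsplit : φ A = φ (A * C) * (φ C)⁻¹ := by
    have : φ (A * C) = φ A * φ C := _root_.map_mul φ A C
    rw [this]
    group
  rw [hsplit, tc_mul, tc_inv, hgenAC, hgenC]
  ring

end UTC

namespace UTC
variable {p d : ℕ} [Fact p.Prime]

/-- the level-3 reference subgroup for the even case -/
def TE (p d : ℕ) [Fact p.Prime] (b : ℕ) : Subgroup (UU p (d+1)) :=
  ⁅Hsub p d b, Gs p (d+1) 2⁆ ⊔ Gs p (d+1) 4

lemma xr_mem_Hsub {k a : ℕ} (h1 : a < a + 1) (h2 : a + 1 < d + 1) (v : ZMod p)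
    (ha : ¬ (k ≤ a ∧ a < d - k)) : (xr a (a+1) h1 h2 v : UU p (d+1)) ∈ Hsub p d k := by
  rw [mem_Hsub_iff]
  intro i hi1 hi2
  rw [tc_xr, if_neg (by omega)]

lemma TE_eq {b : ℕ} (hd : d = 2*b + 4) :
    TE p d b = Kker 3 (by omega) (fun a => a = b ∨ a = b + 1) := by
  apply T3_desc
  · intro u hu a ha
    rw [mem_Hsub_iff] at hu
    rcases ha with h | h
    · rw [h]
      exact ⟨hu b (by omega) (by omega), hu (b+2) (by omega) (by omega)⟩
    · rw [h]
      exact ⟨hu (b+1) (by omega) (by omega), hu (b+1+2) (by omega) (by omega)⟩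
  · intro a ha h3 v
    push_neg at ha
    rcases Nat.lt_or_ge a b with hcase | hcase
    · -- a ≤ b - 1 : left factor in Hsub b
      have hcomm := xr_comm a (a+1) (a+3) (by omega) (by omega) h3 v 1
      have e : xr a (a+3) (by omega) h3 (v * 1) = xr a (a+3) (by omega) h3 v := by rw [mul_one]
      rw [e] at hcomm
      rw [← hcomm]
      apply le_sup_left (α := Subgroup (UU p (d+1)))
      apply Subgroup.commutator_mem_commutator
      · exact xr_mem_Hsub _ _ _ (by omega)
      · exact xr_mem_Gs _ _ _ _ _ (by omega)
    · -- a ≥ b + 2 : right factor in Hsub b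
      have ha2 : b + 2 ≤ a := by omega
      have hcomm := xr_comm a (a+2) (a+3) (by omega) (by omega) h3 v 1
      have e : xr a (a+3) (by omega) h3 (v * 1) = xr a (a+3) (by omega) h3 v := by rw [mul_one]
      rw [e] at hcomm
      rw [← hcomm]
      apply le_sup_left (α := Subgroup (UU p (d+1)))
      rw [Subgroup.commutator_comm]
      apply Subgroup.commutator_mem_commutator
      · exact xr_mem_Gs _ _ _ _ _ (by omega)
      · rw [show (xr (a+2) (a+3) (by omega) h3 1 : UU p (d+1))
            = xr (a+2) (a+2+1) (by omega) (by omega) 1 from rfl]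
        exact xr_mem_Hsub _ _ _ (by omega)

lemma TE_stab {b : ℕ} (hd : d = 2*b + 4) (φ : UU p (d+1) ≃* UU p (d+1)) {g : UU p (d+1)}
    (hg : g ∈ TE p d b) : φ g ∈ TE p d b := by
  have hmap : (TE p d b).map φ.toMonoidHom = TE p d b := by
    unfold TE
    rw [Subgroup.map_sup, Subgroup.map_commutator,
      map_eq_of_stab (Hsub p d b) (fun ψ g hg => key_gen (by omega) ψ hg) φ,
      map_eq_of_stab (Gs p (d+1) 2) (fun ψ g hg => Gs_stab ψ (by omega) hg) φ,
      map_eq_of_stab (Gs p (d+1) 4) (fun ψ g hg => Gs_stab ψ (by omega) hg) φ]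
  rw [← hmap]
  exact ⟨g, hg, rfl⟩

/-- The second-order condition for the even case. -/
def Econd (b : ℕ) (A : UU p (d+1)) : Prop :=
  ∀ X ∈ Cg p d (b+3), ⁅A, ⁅A, X⁆⁆ ∈ TE p d b

lemma E_iff (hp : 3 ≤ p) {b : ℕ} (hd : d = 2*b + 4) {A : UU p (d+1)} :
    Econd b A ↔ (tc A b * tc A (b+1) = 0 ∧ tc A b * tc A (b+2) = 0
      ∧ tc A (b+1) * tc A (b+3) = 0 ∧ tc A (b+2) * tc A (b+3) = 0) := by
  have h2 : (2 : ZMod p) ≠ 0 := two_ne_zero' hp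
  constructor
  · intro hA
    have hmem : ∀ (i : ℕ) (hi1 : i < i + 1) (hi2 : i+1 < d+1), b + 1 ≤ i → i ≤ b + 2 →
        ev ⁅A, ⁅A, (xr i (i+1) hi1 hi2 1 : UU p (d+1))⁆⁆ b (b+3) = 0
        ∧ ev ⁅A, ⁅A, (xr i (i+1) hi1 hi2 1 : UU p (d+1))⁆⁆ (b+1) (b+1+3) = 0 := by
      intro i hi1 hi2 hbi hib
      have hX : (xr i (i+1) hi1 hi2 1 : UU p (d+1)) ∈ Cg p d (b+3) :=
        xr_mem_cent (by omega) (by omega) hi2 1 (by omega) (by omega)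
      have hm := hA _ hX
      rw [TE_eq hd] at hm
      exact ⟨hm.2 b (Or.inl rfl), hm.2 (b+1) (Or.inr rfl)⟩
    obtain ⟨k10, k11⟩ := hmem (b+1) (by omega) (by omega) le_rfl (by omega)
    obtain ⟨k20, k21⟩ := hmem (b+2) (by omega) (by omega) (by omega) (by omega)
    rw [SO_val, tc_xr, tc_xr, tc_xr,
      if_neg (by omega), if_pos rfl, if_neg (by omega)] at k10
    rw [SO_val, tc_xr, tc_xr, tc_xr,
      if_neg (by omega), if_neg (by omega), if_pos rfl] at k11
    rw [SO_val, tc_xr, tc_xr, tc_xr,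
      if_pos rfl, if_neg (by omega), if_neg (by omega)] at k20
    rw [SO_val, tc_xr, tc_xr, tc_xr,
      if_neg (by omega), if_pos rfl, if_neg (by omega)] at k21
    refine ⟨?_, ?_, ?_, ?_⟩
    · linear_combination k20
    · have h3 : (2 : ZMod p) * (tc A b * tc A (b+2)) = 0 := by linear_combination -k10
      rcases mul_eq_zero.mp h3 with h | h
      · exact absurd h h2
      · exact h
    · have h4 : (2 : ZMod p) * (tc A (b+1) * tc A (b+1+2)) = 0 := by linear_combination -k21
      rcases mul_eq_zero.mp h4 with h | h
      · exact absurd h h2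
      · exact h
    · have h5 : tc A (b+1+1) * tc A (b+1+2) = 0 := by linear_combination k11
      exact h5
  · rintro ⟨e1, e2, e3, e4⟩ X hX
    have hXs : ∀ j, ¬ (j = b+1 ∨ j = b+2) → tc X j = 0 := by
      intro j hj
      exact cent_tc (by omega) (by omega) hX (by omega)
    rw [TE_eq hd]
    refine ⟨Lv_comm le_rfl (by omega) (Lv_one_all A)
      (Lv_comm le_rfl le_rfl (Lv_one_all A) (Lv_one_all X)), fun a ha => ?_⟩
    rcases ha with h | h
    · rw [h, SO_val, hXs b (by omega)]
      linear_combination tc X (b+2) * e1 - 2 * tc X (b+1) * e2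
    · rw [h, SO_val, hXs (b+1+2) (by omega)]
      simp only [show b+1+1 = b+2 from rfl, show b+1+2 = b+3 from rfl]
      linear_combination -2 * tc X (b+2) * e3 + tc X (b+1) * e4

lemma E_stab {b : ℕ} (hd : d = 2*b + 4) (φ : UU p (d+1) ≃* UU p (d+1)) {A : UU p (d+1)}
    (hA : Econd b A) : Econd b (φ A) := by
  intro X hX
  have hY : φ.symm X ∈ Cg p d (b+3) := cent_stab φ.symm (by omega) hX
  have h2 : φ ⁅A, ⁅A, φ.symm X⁆⁆ ∈ TE p d b := TE_stab hd φ (hA _ hY)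
  rwa [map_commutatorElement, map_commutatorElement, MulEquiv.apply_symm_apply] at h2

end UTC

namespace UTC
variable {p d : ℕ} [Fact p.Prime]

lemma key_w2_generic (hp : 3 ≤ p) {b : ℕ} (hd : d = 2*b + 4) (φ : UU p (d+1) ≃* UU p (d+1))
    {A : UU p (d+1)} (hm1 : tc A (b+1) = 0) (hm2 : tc A (b+2) = 0) (ha : tc A b ≠ 0) :
    tc (φ A) (b+1) = 0 ∧ tc (φ A) (b+2) = 0 := by
  by_contra hmid
  have hE : Econd b A := by
    rw [E_iff hp hd]
    exact ⟨by rw [hm1]; ring, by rw [hm2]; ring, by rw [hm1]; ring, by rw [hm2]; ring⟩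
  have hEφ := (E_iff hp hd).mp (E_stab hd φ hE)
  have hmid' : tc (φ A) (b+1) ≠ 0 ∨ tc (φ A) (b+2) ≠ 0 := by tauto
  have houter : tc (φ A) b = 0 ∧ tc (φ A) (b+3) = 0 := by
    rcases hmid' with h | h
    · exact ⟨by rcases mul_eq_zero.mp hEφ.1 with h' | h'; exact h'; exact absurd h' h,
        by rcases mul_eq_zero.mp hEφ.2.2.1 with h' | h'; exact absurd h' h; exact h'⟩
    · exact ⟨by rcases mul_eq_zero.mp hEφ.2.1 with h' | h'; exact h'; exact absurd h' h,
        by rcases mul_eq_zero.mp hEφ.2.2.2 with h' | h'; exact absurd h' h; exact h'⟩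
  set C : UU p (d+1) := xr (b+1) (b+2) (by omega) (by omega) (- tc (φ A) (b+1))
      * xr (b+2) (b+3) (by omega) (by omega) (- tc (φ A) (b+2)) with hC
  have htC : ∀ j, tc C j = (if b+1 = j then - tc (φ A) (b+1) else 0)
      + (if b+2 = j then - tc (φ A) (b+2) else 0) := by
    intro j
    rw [hC, tc_mul,
      show (xr (b+1) (b+2) (by omega) (by omega) (- tc (φ A) (b+1)) : UU p (d+1))
        = xr (b+1) (b+1+1) (by omega) (by omega) (- tc (φ A) (b+1)) from rfl,
      show (xr (b+2) (b+3) (by omega) (by omega) (- tc (φ A) (b+2)) : UU p (d+1))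
        = xr (b+2) (b+2+1) (by omega) (by omega) (- tc (φ A) (b+2)) from rfl,
      tc_xr, tc_xr]
  have hCmem : C ∈ Cg p d (b+3) := by
    refine Subgroup.mul_mem _ ?_ ?_
    · exact xr_mem_cent (m := b+3) (i := b+1) (by omega) (by omega) (by omega) _
        (by omega) (by omega)
    · exact xr_mem_cent (m := b+3) (i := b+2) (by omega) (by omega) (by omega) _
        (by omega) (by omega)
  set B : UU p (d+1) := φ.symm C with hB
  have hBmem : B ∈ Cg p d (b+3) := cent_stab φ.symm (by omega) hCmem
  have hBsupp : ∀ j, ¬ (j = b+1 ∨ j = b+2) → tc B j = 0 := by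
    intro j hj
    exact cent_tc (by omega) (by omega) hBmem (by omega)
  have hφB : φ B = C := by rw [hB]; exact φ.apply_symm_apply C
  have hBmid : ¬ (tc B (b+1) = 0 ∧ tc B (b+2) = 0) := by
    rintro ⟨h1, h2⟩
    have hBG : B ∈ Gs p (d+1) 2 := by
      rw [mem_Gs2_iff_tc]
      intro i
      by_cases hi : i = b+1 ∨ i = b+2
      · rcases hi with h | h
        · rw [h]; exact h1
        · rw [h]; exact h2
      · exact hBsupp i hi
    have hCG : C ∈ Gs p (d+1) 2 := by
      rw [← hφB]
      exact Gs_stab φ (by omega) hBG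
    rw [mem_Gs2_iff_tc] at hCG
    have e1 := hCG (b+1)
    have e2 := hCG (b+2)
    rw [htC, if_pos rfl, if_neg (by omega)] at e1
    rw [htC, if_neg (by omega), if_pos rfl] at e2
    rcases hmid' with h | h
    · apply h; linear_combination -e1
    · apply h; linear_combination -e2
  have hnE : ¬ Econd b (A * B) := by
    rw [E_iff hp hd]
    have hab : tc (A * B) b = tc A b := by
      rw [tc_mul, hBsupp b (by omega)]; ring
    rintro ⟨f1, f2, -, -⟩
    have e1 : tc (A*B) (b+1) = tc B (b+1) := by rw [tc_mul, hm1]; ring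
    have e2 : tc (A*B) (b+2) = tc B (b+2) := by rw [tc_mul, hm2]; ring
    rw [hab, e1] at f1
    rw [hab, e2] at f2
    apply hBmid
    constructor
    · rcases mul_eq_zero.mp (by linear_combination f1 : tc A b * tc B (b+1) = 0) with h | h
      · exact absurd h ha
      · exact h
    · rcases mul_eq_zero.mp (by linear_combination f2 : tc A b * tc B (b+2) = 0) with h | h
      · exact absurd h ha
      · exact h
  apply hnE
  have hEφAB : Econd b (φ (A * B)) := by
    rw [E_iff hp hd]
    have hφAB : φ (A * B) = φ A * C := by rw [_root_.map_mul, hφB]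
    rw [hφAB]
    have g1 : tc (φ A * C) (b+1) = 0 := by
      rw [tc_mul, htC, if_pos rfl, if_neg (by omega)]; ring
    have g2 : tc (φ A * C) (b+2) = 0 := by
      rw [tc_mul, htC, if_neg (by omega), if_pos rfl]; ring
    exact ⟨by rw [g1]; ring, by rw [g2]; ring, by rw [g1]; ring, by rw [g2]; ring⟩
  have := E_stab hd φ.symm hEφAB
  rwa [φ.symm_apply_apply] at this

lemma key_w2 (hp : 3 ≤ p) {b : ℕ} (hd : d = 2*b + 4) (φ : UU p (d+1) ≃* UU p (d+1))
    {A : UU p (d+1)} (hA : A ∈ Hsub p d (b+1)) : φ A ∈ Hsub p d (b+1) := by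
  rw [mem_Hsub_iff] at hA ⊢
  have hm1 : tc A (b+1) = 0 := hA (b+1) le_rfl (by omega)
  have hm2 : tc A (b+2) = 0 := hA (b+2) (by omega) (by omega)
  obtain ⟨u, hu, hxu⟩ := exists_off hp (tc A b)
  set C₀ : UU p (d+1) := xr b (b+1) (by omega) (by omega) u with hC₀
  have htC₀ : ∀ j, tc C₀ j = if b = j then u else 0 := fun j => tc_xr _ _ _
  have hgen1 := key_w2_generic hp hd φ
    (A := A * C₀)
    (by rw [tc_mul, hm1, htC₀, if_neg (by omega)]; ring)
    (by rw [tc_mul, hm2, htC₀, if_neg (by omega)]; ring)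
    (by rw [tc_mul, htC₀, if_pos rfl]; exact hxu)
  have hgen2 := key_w2_generic hp hd φ (A := C₀)
    (by rw [htC₀, if_neg (by omega)])
    (by rw [htC₀, if_neg (by omega)])
    (by rw [htC₀, if_pos rfl]; exact hu)
  have hsplit : φ A = φ (A * C₀) * (φ C₀)⁻¹ := by
    have : φ (A * C₀) = φ A * φ C₀ := _root_.map_mul φ A C₀
    rw [this]
    group
  intro i h1 h2
  rcases (by omega : i = b + 1 ∨ i = b + 2) with h | h
  · rw [h, hsplit, tc_mul, tc_inv, hgen1.1, hgen2.1]; ring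
  · rw [h, hsplit, tc_mul, tc_inv, hgen1.2, hgen2.2]; ring

lemma key_w3 (hp : 3 ≤ p) {k : ℕ} (hd : d = 2*k + 3) (φ : UU p (d+1) ≃* UU p (d+1))
    {A : UU p (d+1)} (hA : A ∈ Hsub p d k) : φ A ∈ Hsub p d k := by
  rw [mem_Hsub_iff] at hA ⊢
  have hU : A ∈ U1 p d k :=
    mem_U1.mpr ⟨hA k le_rfl (by omega), hA (k+2) (by omega) (by omega)⟩
  have hH : A ∈ Hsub p d (k+1) :=
    mem_Hsub_iff.mpr (fun i h1 h2 => hA i (by omega) (by omega))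
  have hU2 := mem_U1.mp (U1_stab hd φ hU)
  have hH2 := mem_Hsub_iff.mp (key_w1 hp hd φ hH)
  intro i h1 h2
  rcases (by omega : i = k ∨ i = k+1 ∨ i = k+2) with h | h | h
  · rw [h]; exact hU2.1
  · rw [h]; exact hH2 (k+1) le_rfl (by omega)
  · rw [h]; exact hU2.2

lemma key_all (hp : 3 ≤ p) {k : ℕ} (hk1 : 1 ≤ k) (hdk : 2*k + 1 ≤ d)
    (φ : UU p (d+1) ≃* UU p (d+1)) {A : UU p (d+1)} (hA : A ∈ Hsub p d k) :
    φ A ∈ Hsub p d k := by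
  rcases (by omega : d = 2*k+1 ∨ d = 2*k+2 ∨ d = 2*k+3 ∨ 2*k+4 ≤ d) with h | h | h | h
  · obtain ⟨b, rfl⟩ : ∃ b, k = b + 1 := ⟨k - 1, by omega⟩
    exact key_w1 hp (by omega) φ hA
  · obtain ⟨b, rfl⟩ : ∃ b, k = b + 1 := ⟨k - 1, by omega⟩
    exact key_w2 hp (by omega) φ hA
  · exact key_w3 hp h φ hA
  · exact key_gen h φ hA

end UTC


/-- Let `p ≥ 3` be a prime, `d ≥ 3`, and let `U = UT(d+1, ℤ/pℤ)`.
With `m = ⌈d/2⌉`, for every `1 ≤ k ≤ m − 1` the subgroup `H_k` generated by `γ₂(U)` and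
the root subgroups `X_1, …, X_k, X_{d−k+1}, …, X_d` is a characteristic subgroup of `U`. -/
theorem Hsub_characteristic (p d : ℕ) [Fact p.Prime] (hp : 3 ≤ p) (hd : 3 ≤ d) :
    ∀ k : ℕ, 1 ≤ k → k ≤ (d + 1) / 2 - 1 → (Hsub p d k).Characteristic := by
  intro k hk1 hk2
  have hdk : 2*k + 1 ≤ d := by omega
  constructor
  intro φ
  ext A
  rw [Subgroup.mem_comap]
  constructor
  · intro h
    have := UTC.key_all hp hk1 hdk φ.symm h
    simpa using this
  · intro h
    exact UTC.key_all hp hk1 hdk φ h
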